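/- arXiv:1707.04285 — 5 statements merged into one kernel-verified Lean document; each statement's English description precedes it below -/
import Mathlib

section
/- Almost surely, there exist constants 0 < c ≤ C (depending on the sample point) such that c·n^{−α} ≤ Y_n ≤ C·n^{−α} for all n ≥ 1. -/
open MeasureTheory ProbabilityTheory Filter
open Set Nat
open scoped ENNReal NNReal

lemma exp_moment {r : ℝ} (hr : 0 < r) (n : ℕ) (hn : 1 ≤ n) :
    Integrable (fun x => x ^ n) (expMeasure r) ∧
      ∫ x, x ^ n ∂(expMeasure r) = (n ! : ℝ) / r ^ n := by
  have hmeq : expMeasure r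
      = (volume : Measure ℝ).withDensity (fun x => ((exponentialPDFReal r x).toNNReal : ℝ≥0∞)) :=
    rfl
  have hpm : Measurable fun x => (exponentialPDFReal r x).toNNReal :=
    (measurable_exponentialPDFReal r).real_toNNReal
  have hsmul : ∀ x : ℝ, (exponentialPDFReal r x).toNNReal • (x ^ n)
      = exponentialPDFReal r x * x ^ n := by
    intro x
    rw [NNReal.smul_def, Real.coe_toNNReal _ (exponentialPDFReal_nonneg hr x), smul_eq_mul]
  have hpdf_pos : ∀ x : ℝ, 0 < x → exponentialPDFReal r x = r * Real.exp (-(r * x)) := by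
    intro x hx
    rw [exponentialPDFReal, gammaPDFReal, if_pos hx.le]
    simp [Real.rpow_one, Real.Gamma_one, Real.rpow_zero]
  have hpdf_zero : ∀ x : ℝ, x ≤ 0 → exponentialPDFReal r x * x ^ n = 0 := by
    intro x hx
    rcases lt_or_eq_of_le hx with h | h
    · rw [exponentialPDFReal, gammaPDFReal, if_neg (not_le.mpr h), zero_mul]
    · rw [h, zero_pow (by omega), mul_zero]
  have hInt : Integrable (fun x => exponentialPDFReal r x * x ^ n) (volume : Measure ℝ) := by
    rw [← integrableOn_univ, ← Set.Iic_union_Ioi (a := (0:ℝ))]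
    apply IntegrableOn.union
    · exact (integrableOn_zero (s := Iic (0:ℝ))).congr_fun
        (fun x hx => (hpdf_zero x hx).symm) measurableSet_Iic
    · have h1 : IntegrableOn (fun x : ℝ => x ^ (n:ℝ) * Real.exp (-r * x ^ (1:ℝ))) (Ioi 0) :=
        integrableOn_rpow_mul_exp_neg_mul_rpow (lt_of_lt_of_le (by norm_num) (Nat.cast_nonneg n)) zero_lt_one hr
      apply IntegrableOn.congr_fun (h1.const_mul r) _ measurableSet_Ioi
      intro x hx
      show r * (x ^ (n:ℝ) * Real.exp (-r * x ^ (1:ℝ))) = exponentialPDFReal r x * x ^ n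
      rw [hpdf_pos x hx, Real.rpow_one, Real.rpow_natCast]
      ring
  constructor
  · rw [hmeq, integrable_withDensity_iff_integrable_smul hpm]
    exact hInt.congr (Eventually.of_forall fun x => (hsmul x).symm)
  · rw [hmeq, integral_withDensity_eq_integral_smul hpm]
    simp_rw [hsmul]
    rw [← setIntegral_eq_integral_of_forall_compl_eq_zero
      (s := Ioi (0:ℝ)) (fun x hx => hpdf_zero x (by simpa using hx))]
    have : ∀ x ∈ Ioi (0:ℝ), exponentialPDFReal r x * x ^ n
        = r * (x ^ (((n:ℝ)+1) - 1) * Real.exp (-(r * x))) := by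
      intro x hx
      rw [hpdf_pos x hx]
      rw [show ((n:ℝ)+1) - 1 = (n:ℝ) by ring, Real.rpow_natCast]
      ring
    rw [setIntegral_congr_fun measurableSet_Ioi this, integral_const_mul,
      Real.integral_rpow_mul_exp_neg_mul_Ioi (by positivity) hr]
    rw [show (n:ℝ) + 1 = ((n+1 : ℕ) : ℝ) by push_cast; ring, Real.rpow_natCast]
    rw [show (((n+1 : ℕ) : ℝ)) = (n:ℝ) + 1 from by push_cast; ring, Real.Gamma_nat_eq_factorial]
    rw [one_div, inv_pow, eq_div_iff (by positivity)]
    field_simp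
    ring

lemma geom_bd : ∀ n : ℕ, ∑ j ∈ Finset.range n, (3/4:ℝ)^j ≤ 4 := by
  intro n
  have h := pow_nonneg (by norm_num : (0:ℝ) ≤ 3/4) n
  rw [geom_sum_eq (by norm_num : (3/4:ℝ) ≠ 1) n, div_le_iff_of_neg (by norm_num : (3/4:ℝ) - 1 < 0)]
  nlinarith

lemma det_bdd (α : ℝ) (hα : 0 < α) (e : ℕ → ℝ) (he : ∀ k, 0 ≤ e k) (J : ℕ)
    (hb : ∀ j, J ≤ j → |∑ k ∈ Finset.Ico (2^j) (2^(j+1)), (e k - α/(k+1))| ≤ (3/4:ℝ)^j) :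
    ∃ B : ℝ, 0 ≤ B ∧ ∀ m : ℕ, |∑ k ∈ Finset.range m, (e k - α/(k+1))| ≤ B := by
  set f : ℕ → ℝ := fun k => e k - α/(k+1) with hf
  set F : ℕ → ℝ := fun m => ∑ k ∈ Finset.range m, f k with hF
  set G : ℕ → ℝ := fun j => ∑ k ∈ Finset.Ico (2^j) (2^(j+1)), f k with hG
  set SJ : ℝ := ∑ j ∈ Finset.range J, |G j| with hSJ
  have hSJ0 : 0 ≤ SJ := Finset.sum_nonneg fun j _ => abs_nonneg _
  have hGa : ∀ j, |G j| ≤ SJ + 1 := by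
    intro j
    rcases lt_or_ge j J with h | h
    · have := Finset.single_le_sum (f := fun j => |G j|) (fun i _ => abs_nonneg _)
        (Finset.mem_range.mpr h)
      linarith
    · have h1 := hb j h
      have h2 : (3/4:ℝ)^j ≤ 1 := pow_le_one₀ (by norm_num) (by norm_num)
      linarith
  have hsum : ∀ L, ∑ j ∈ Finset.range L, |G j| ≤ SJ + 4 := by
    intro L
    rcases le_or_gt L J with h | h
    · have := Finset.sum_le_sum_of_subset_of_nonneg
        (Finset.range_subset_range.mpr h) (fun i _ _ => abs_nonneg (G i))
      linarith
    · rw [← Finset.sum_range_add_sum_Ico _ h.le]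
      have h1 : ∑ j ∈ Finset.Ico J L, |G j| ≤ ∑ j ∈ Finset.Ico J L, (3/4:ℝ)^j :=
        Finset.sum_le_sum fun j hj => hb j (Finset.mem_Ico.mp hj).1
      have h2 : ∑ j ∈ Finset.Ico J L, (3/4:ℝ)^j ≤ ∑ j ∈ Finset.range L, (3/4:ℝ)^j := by
        rw [Finset.range_eq_Ico]
        exact Finset.sum_le_sum_of_subset_of_nonneg
          (Finset.Ico_subset_Ico (Nat.zero_le _) le_rfl) (fun i _ _ => by positivity)
      have h3 := geom_bd L
      linarith
  have hmean : ∀ L : ℕ, ∑ k ∈ Finset.Ico ((2:ℕ)^L) ((2:ℕ)^(L+1)), α/((k:ℝ)+1) ≤ α := by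
    intro L
    have hcard : (2:ℕ)^(L+1) - 2^L = 2^L := by rw [pow_succ]; omega
    calc ∑ k ∈ Finset.Ico ((2:ℕ)^L) ((2:ℕ)^(L+1)), α/((k:ℝ)+1)
        ≤ ∑ _k ∈ Finset.Ico ((2:ℕ)^L) ((2:ℕ)^(L+1)), α/((2:ℝ)^L) := by
          apply Finset.sum_le_sum
          intro k hk
          have hk1 : (2:ℕ)^L ≤ k := (Finset.mem_Ico.mp hk).1
          have : (2:ℝ)^L ≤ (k:ℝ)+1 := by
            calc (2:ℝ)^L = ((2^L : ℕ) : ℝ) := by push_cast; ring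
            _ ≤ (k:ℝ) := by exact_mod_cast hk1
            _ ≤ (k:ℝ)+1 := by linarith
          exact div_le_div_of_nonneg_left hα.le (by positivity) this
      _ = ((2:ℕ)^L : ℝ) * (α/((2:ℝ)^L)) := by
          rw [Finset.sum_const, Nat.card_Ico, hcard, nsmul_eq_mul]
          push_cast
          ring
      _ = α := by
          push_cast
          field_simp
  have hF2 : ∀ L, F (2^L) = F 1 + ∑ j ∈ Finset.range L, G j := by
    intro L
    induction L with
    | zero => simp [hF]
    | succ L ih =>
      have : F (2^L) + G L = F (2^(L+1)) :=
        Finset.sum_range_add_sum_Ico f (Nat.pow_le_pow_right (by norm_num) (Nat.le_succ L))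
      rw [← this, ih, Finset.sum_range_succ]
      ring
  have hF2bd : ∀ L, |F (2^L)| ≤ |F 1| + (SJ + 4) := by
    intro L
    rw [hF2 L]
    calc |F 1 + ∑ j ∈ Finset.range L, G j| ≤ |F 1| + |∑ j ∈ Finset.range L, G j| := abs_add_le _ _
      _ ≤ |F 1| + ∑ j ∈ Finset.range L, |G j| := by
          gcongr; exact Finset.abs_sum_le_sum_abs _ _
      _ ≤ |F 1| + (SJ + 4) := by linarith [hsum L]
  refine ⟨|F 1| + (SJ + 4) + (SJ + 1 + α), by positivity, ?_⟩
  intro m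
  rcases Nat.eq_zero_or_pos m with rfl | hm
  · simp [hF]
    positivity
  set L := Nat.log 2 m with hL
  have h1 : 2^L ≤ m := Nat.pow_log_le_self 2 hm.ne'
  have h2 : m < 2^(L+1) := Nat.lt_pow_succ_log_self (by norm_num) m
  have hsplit : F (2^L) + ∑ k ∈ Finset.Ico (2^L) m, f k = F m :=
    Finset.sum_range_add_sum_Ico f h1
  set T : ℝ := ∑ k ∈ Finset.Ico (2^L) m, f k with hT
  have hTsub : ∑ k ∈ Finset.Ico (2^L) m, α/(k+1:ℝ) ≤ α := by
    refine le_trans ?_ (hmean L)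
    exact Finset.sum_le_sum_of_subset_of_nonneg
      (Finset.Ico_subset_Ico le_rfl h2.le) (fun k _ _ => by positivity)
  have hTle : T ≤ |G L| + α := by
    have e1 : T ≤ ∑ k ∈ Finset.Ico (2^L) m, e k :=
      Finset.sum_le_sum fun k _ => by
        have : 0 ≤ α/(k+1:ℝ) := by positivity
        simp only [hf]; linarith
    have e2 : ∑ k ∈ Finset.Ico (2^L) m, e k ≤ ∑ k ∈ Finset.Ico (2^L) (2^(L+1)), e k :=
      Finset.sum_le_sum_of_subset_of_nonneg
        (Finset.Ico_subset_Ico le_rfl h2.le) (fun k _ _ => he k)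
    have e3 : ∑ k ∈ Finset.Ico ((2:ℕ)^L) ((2:ℕ)^(L+1)), e k
        = G L + ∑ k ∈ Finset.Ico ((2:ℕ)^L) ((2:ℕ)^(L+1)), α/((k:ℝ)+1) := by
      simp only [hG, hf, Finset.sum_sub_distrib]
      ring
    have e4 := hmean L
    have e5 := le_abs_self (G L)
    linarith
  have hTge : -α ≤ T := by
    have e1 : ∑ k ∈ Finset.Ico (2^L) m, (-(α/(k+1:ℝ))) ≤ T :=
      Finset.sum_le_sum fun k _ => by
        have := he k
        simp only [hf]; linarith
    rw [Finset.sum_neg_distrib] at e1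
    linarith
  have hTabs : |T| ≤ |G L| + α := by
    rw [abs_le]
    constructor
    · have := abs_nonneg (G L); linarith
    · exact hTle
  have := hF2bd L
  have := hGa L
  have : |F m| ≤ |F (2^L)| + |T| := by
    rw [← hsplit]
    exact abs_add_le _ _
  have hfin : |F m| ≤ |F 1| + (SJ + 4) + (SJ + 1 + α) := by
    have := hF2bd L
    have := hGa L
    linarith [hF2bd L, hGa L, hTabs]
  exact hfin

lemma harm_bounds (n : ℕ) (hn : 1 ≤ n) :
    Real.log n ≤ ∑ k ∈ Finset.range (n-1), (1:ℝ)/(k+1) ∧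
      ∑ k ∈ Finset.range (n-1), (1:ℝ)/(k+1) ≤ 1 + Real.log n := by
  have hh : ∑ k ∈ Finset.range (n-1), (1:ℝ)/(k+1) = ((harmonic (n-1) : ℚ) : ℝ) := by
    rw [harmonic]
    push_cast
    simp [one_div]
  constructor
  · have h := log_add_one_le_harmonic (n-1)
    rw [show (n-1) + 1 = n by omega] at h
    rw [hh]; exact h
  · have h := harmonic_le_one_add_log (n-1)
    have h2 : Real.log (n-1 : ℕ) ≤ Real.log n := by
      rcases Nat.eq_or_lt_of_le hn with h1 | h1
      · rw [← h1]; simp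
      · apply Real.log_le_log
          (by exact_mod_cast Nat.lt_of_lt_of_le Nat.zero_lt_one (by omega : 1 ≤ n - 1))
        exact_mod_cast Nat.sub_le n 1
    rw [hh]; linarith

lemma moments_omega {Ω : Type*} [MeasureSpace Ω] [IsProbabilityMeasure (ℙ : Measure Ω)]
    {X : Ω → ℝ} (hX : Measurable X) {r : ℝ} (hr : 0 < r)
    (hd : Measure.map X ℙ = expMeasure r) :
    MemLp X 2 ℙ ∧ (∫ ω, X ω ∂ℙ) = 1/r ∧ variance X ℙ = 1/r^2 := by
  haveI : IsProbabilityMeasure (expMeasure r) := isProbabilityMeasure_expMeasure hr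
  obtain ⟨hi1, hm1⟩ := exp_moment hr 1 le_rfl
  obtain ⟨hi2, hm2⟩ := exp_moment hr 2 one_le_two
  have hmem0 : MemLp (id : ℝ → ℝ) 2 (expMeasure r) :=
    (memLp_two_iff_integrable_sq aestronglyMeasurable_id).mpr (by simpa using hi2)
  rw [← hd] at hmem0
  have hmem : MemLp X 2 ℙ := by
    have := (memLp_map_measure_iff aestronglyMeasurable_id hX.aemeasurable).mp hmem0
    simpa [Function.comp] using this
  have hmean : (∫ ω, X ω ∂ℙ) = 1/r := by
    have h := integral_map (μ := ℙ) hX.aemeasurable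
      (f := fun x : ℝ => x) aestronglyMeasurable_id
    rw [hd] at h
    rw [← h]
    simpa using hm1
  have hsq : (∫ ω, (X ω)^2 ∂ℙ) = 2/r^2 := by
    have h := integral_map (μ := ℙ) hX.aemeasurable
      (f := fun x : ℝ => x^2) (measurable_id.pow_const 2).aestronglyMeasurable
    rw [hd] at h
    rw [← h, hm2]
    norm_num
  refine ⟨hmem, hmean, ?_⟩
  rw [variance_eq_sub hmem]
  have h1 : (∫ ω, (X ^ 2) ω ∂ℙ) = 2/r^2 := by
    simpa [Pi.pow_apply] using hsq
  rw [h1, hmean]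
  field_simp
  ring

/-- Almost surely there are constants `0 < c ≤ C` with `c·n^(−α) ≤ Y_n ≤ C·n^(−α)` for all
`n ≥ 1`, where `Y_n = exp(−(E_1 + ⋯ + E_{n−1}))` and the `E_k` are independent,
exponentially distributed with rate `k/α`. Here `E k` stands for the variable of
index `k + 1`. -/
theorem atlas_ranked_values_power_law_bounds
    {Ω : Type*} [MeasureSpace Ω] [IsProbabilityMeasure (ℙ : Measure Ω)]
    (α : ℝ) (hα : 0 < α) (E : ℕ → Ω → ℝ)
    (hmeas : ∀ k, Measurable (E k))
    (hindep : iIndepFun E ℙ)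
    (hdist : ∀ k : ℕ, Measure.map (E k) ℙ = expMeasure ((k + 1) / α))
    (Y : ℕ → Ω → ℝ)
    (hY : ∀ n : ℕ, ∀ ω, Y n ω = Real.exp (-(∑ k ∈ Finset.range (n - 1), E k ω))) :
    ∀ᵐ ω ∂(ℙ : Measure Ω), ∃ c C : ℝ, 0 < c ∧ c ≤ C ∧ ∀ n : ℕ, 1 ≤ n →
      c * (n : ℝ) ^ (-α) ≤ Y n ω ∧ Y n ω ≤ C * (n : ℝ) ^ (-α) := by
  have hr : ∀ k : ℕ, (0:ℝ) < ((k:ℝ) + 1)/α := fun k => by positivity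
  have hmom := fun k => moments_omega (hmeas k) (hr k) (hdist k)
  have hmemp : ∀ k, MemLp (E k) 2 ℙ := fun k => (hmom k).1
  have hne : ∀ k : ℕ, ((k:ℝ)+1) ≠ 0 := fun k => by positivity
  have hmeanE : ∀ k : ℕ, (∫ ω, E k ω ∂ℙ) = α/((k:ℝ)+1) := by
    intro k
    rw [(hmom k).2.1, one_div_div]
  have hvarE : ∀ k : ℕ, variance (E k) ℙ = (α/((k:ℝ)+1))^2 := by
    intro k
    rw [(hmom k).2.2, div_pow, one_div_div, div_pow]
  -- block sums
  set X : ℕ → Ω → ℝ := fun j => ∑ k ∈ Finset.Ico (2^j) (2^(j+1)), E k with hX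
  have hmemX : ∀ j, MemLp (X j) 2 ℙ := fun j => memLp_finsetSum' _ (fun k _ => hmemp k)
  have hcard : ∀ j : ℕ, (2:ℕ)^(j+1) - 2^j = 2^j := fun j => by rw [pow_succ]; omega
  have hvarX : ∀ j, variance (X j) ℙ ≤ α^2 / 2^j := by
    intro j
    rw [hX]
    rw [IndepFun.variance_sum (fun k _ => hmemp k)
      (fun k _ l _ hkl => hindep.indepFun hkl)]
    calc ∑ k ∈ Finset.Ico ((2:ℕ)^j) ((2:ℕ)^(j+1)), variance (E k) ℙ
        ≤ ∑ _k ∈ Finset.Ico ((2:ℕ)^j) ((2:ℕ)^(j+1)), (α/((2:ℝ)^j))^2 := by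
          apply Finset.sum_le_sum
          intro k hk
          rw [hvarE k]
          have hk1 : (2:ℝ)^j ≤ (k:ℝ)+1 := by
            have := (Finset.mem_Ico.mp hk).1
            calc (2:ℝ)^j = ((2^j : ℕ) : ℝ) := by push_cast; ring
              _ ≤ (k:ℝ) := by exact_mod_cast this
              _ ≤ (k:ℝ)+1 := by linarith
          have h2 : α/((k:ℝ)+1) ≤ α/((2:ℝ)^j) :=
            div_le_div_of_nonneg_left hα.le (by positivity) hk1
          have h3 : 0 ≤ α/((k:ℝ)+1) := by positivity
          nlinarith
      _ = ((2:ℕ)^j : ℝ) * (α/((2:ℝ)^j))^2 := by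
          rw [Finset.sum_const, Nat.card_Ico, hcard j, nsmul_eq_mul]
          push_cast; ring
      _ = α^2 / 2^j := by
          push_cast
          have h2 : ((2:ℝ))^j ≠ 0 := by positivity
          field_simp
  have hEX : ∀ j, (∫ ω, X j ω ∂ℙ) = ∑ k ∈ Finset.Ico ((2:ℕ)^j) ((2:ℕ)^(j+1)), α/((k:ℝ)+1) := by
    intro j
    have : ∀ ω, X j ω = ∑ k ∈ Finset.Ico ((2:ℕ)^j) ((2:ℕ)^(j+1)), E k ω := by
      intro ω; rw [hX]; simp [Finset.sum_apply]
    simp_rw [this]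
    rw [integral_finset_sum _ (fun k _ => (hmemp k).integrable one_le_two)]
    exact Finset.sum_congr rfl fun k _ => hmeanE k
  -- Chebyshev + Borel-Cantelli
  set A : ℕ → Set Ω := fun j => {ω | (3/4:ℝ)^j ≤ |X j ω - ∫ ω', X j ω' ∂ℙ|} with hA
  have hcheb : ∀ j, ℙ (A j) ≤ ENNReal.ofReal (α^2 * (8/9:ℝ)^j) := by
    intro j
    refine le_trans (meas_ge_le_variance_div_sq (hmemX j) (by positivity)) ?_
    apply ENNReal.ofReal_le_ofReal
    rw [div_le_iff₀ (by positivity)]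
    have key : (8/9:ℝ)^j * ((3/4:ℝ)^j)^2 = (1/2:ℝ)^j := by
      rw [← pow_mul, mul_comm j 2, pow_mul, ← mul_pow]
      norm_num
    calc variance (X j) ℙ ≤ α^2 / 2^j := hvarX j
      _ = α^2 * (1/2:ℝ)^j := by rw [div_eq_mul_inv, ← inv_pow]; norm_num
      _ = α^2 * (8/9:ℝ)^j * ((3/4:ℝ)^j)^2 := by rw [mul_assoc, key]
  have htsum : ∑' j, ℙ (A j) ≠ ∞ := by
    apply ne_top_of_le_ne_top _ (ENNReal.tsum_le_tsum hcheb)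
    have hs : Summable (fun j : ℕ => α^2 * (8/9:ℝ)^j) :=
      (summable_geometric_of_lt_one (by norm_num) (by norm_num)).mul_left _
    rw [← ENNReal.ofReal_tsum_of_nonneg (fun j => by positivity) hs]
    exact ENNReal.ofReal_ne_top
  have hBC := MeasureTheory.ae_eventually_notMem htsum
  have hnonneg : ∀ᵐ ω ∂(ℙ : Measure Ω), ∀ k, 0 ≤ E k ω := by
    rw [ae_all_iff]
    intro k
    rw [ae_iff]
    have hset : {ω | ¬ 0 ≤ E k ω} = E k ⁻¹' (Iio 0) := by
      ext ω; simp [not_le]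
    rw [hset, ← Measure.map_apply (hmeas k) measurableSet_Iio, hdist k]
    show expMeasure (((k:ℝ)+1)/α) (Iio 0) = 0
    rw [expMeasure, gammaMeasure, withDensity_apply _ measurableSet_Iio]
    exact lintegral_exponentialPDF_of_nonpos le_rfl
  filter_upwards [hBC, hnonneg] with ω hb1 hb2
  obtain ⟨J, hJ⟩ := eventually_atTop.mp hb1
  set e : ℕ → ℝ := fun k => E k ω with he
  have hblocks : ∀ j, J ≤ j →
      |∑ k ∈ Finset.Ico (2^j) (2^(j+1)), (e k - α/((k:ℝ)+1))| ≤ (3/4:ℝ)^j := by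
    intro j hj
    have h1 := hJ j hj
    rw [hA] at h1
    simp only [Set.mem_setOf_eq, not_le] at h1
    have h2 : X j ω - (∫ ω', X j ω' ∂ℙ)
        = ∑ k ∈ Finset.Ico ((2:ℕ)^j) ((2:ℕ)^(j+1)), (e k - α/((k:ℝ)+1)) := by
      rw [hEX j, hX]
      simp only [Finset.sum_apply, Finset.sum_sub_distrib, he]
    rw [h2] at h1
    exact h1.le
  obtain ⟨B, hB0, hBbd⟩ := det_bdd α hα e hb2 J hblocks
  refine ⟨Real.exp (-(B+α)), Real.exp B, Real.exp_pos _,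
    Real.exp_le_exp.mpr (by linarith), ?_⟩
  intro n hn
  obtain ⟨hlog1, hlog2⟩ := harm_bounds n hn
  have hnpos : (0:ℝ) < n := by exact_mod_cast hn
  have hrpow : (n:ℝ) ^ (-α) = Real.exp (Real.log n * (-α)) := Real.rpow_def_of_pos hnpos _
  have hFb := abs_le.mp (hBbd (n-1))
  have hS : ∑ k ∈ Finset.range (n-1), e k
      = (∑ k ∈ Finset.range (n-1), (e k - α/((k:ℝ)+1)))
        + α * ∑ k ∈ Finset.range (n-1), 1/((k:ℝ)+1) := by
    rw [Finset.sum_sub_distrib, Finset.mul_sum]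
    simp_rw [mul_one_div]
    ring
  have m1 : α * (∑ k ∈ Finset.range (n-1), 1/((k:ℝ)+1)) ≤ α * (1 + Real.log n) :=
    mul_le_mul_of_nonneg_left hlog2 hα.le
  have m2 : α * Real.log n ≤ α * (∑ k ∈ Finset.range (n-1), 1/((k:ℝ)+1)) :=
    mul_le_mul_of_nonneg_left hlog1 hα.le
  have hYe : Y n ω = Real.exp (-(∑ k ∈ Finset.range (n-1), e k)) := hY n ω
  constructor
  · rw [hYe, hrpow, ← Real.exp_add]
    apply Real.exp_le_exp.mpr
    have := hFb.2
    nlinarith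
  · rw [hYe, hrpow, ← Real.exp_add]
    apply Real.exp_le_exp.mpr
    have := hFb.1
    nlinarith
end

section
/- Almost surely, lim_{n→∞} (log Y_n)/(log n) = −α. -/
open MeasureTheory ProbabilityTheory Filter

section AtlasAux

open Real Set
open scoped ENNReal NNReal

lemma expMeasure_Iic (r x : ℝ) :
    expMeasure r (Iic x) = ∫⁻ y in Iic x, exponentialPDF r y := by
  rw [expMeasure, gammaMeasure, withDensity_apply _ measurableSet_Iic]
  rfl

lemma map_mul_expMeasure {c r : ℝ} (hc : 0 < c) (hr : 0 < r) :
    Measure.map (fun x => c * x) (expMeasure r) = expMeasure (r / c) := by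
  have h1 : IsProbabilityMeasure (expMeasure r) := isProbabilityMeasure_expMeasure hr
  have h2 : IsProbabilityMeasure (expMeasure (r / c)) :=
    isProbabilityMeasure_expMeasure (div_pos hr hc)
  have hm : Measurable fun x : ℝ => c * x := measurable_id.const_mul c
  have h3 : IsProbabilityMeasure (Measure.map (fun x => c * x) (expMeasure r)) :=
    Measure.isProbabilityMeasure_map hm.aemeasurable
  refine Measure.ext_of_Iic _ _ fun a => ?_
  rw [Measure.map_apply hm measurableSet_Iic]
  have hpre : (fun x : ℝ => c * x) ⁻¹' Iic a = Iic (a / c) := by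
    ext x
    simp only [mem_preimage, mem_Iic, le_div_iff₀ hc, mul_comm]
  rw [hpre, expMeasure_Iic, expMeasure_Iic, lintegral_exponentialPDF_eq_antiDeriv hr,
    lintegral_exponentialPDF_eq_antiDeriv (div_pos hr hc)]
  have hcond : 0 ≤ a / c ↔ 0 ≤ a := by rw [le_div_iff₀ hc, zero_mul]
  have harg : r * (a / c) = r / c * a := by field_simp
  rw [harg]
  congr 1
  simp only [hcond]

lemma exp_indicator_eq :
    (fun x : ℝ => x * (exponentialPDF 1 x).toReal)
      = Set.indicator (Ioi (0:ℝ)) (fun x => Real.exp (-x) * x) := by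
  funext x
  rw [exponentialPDF_eq]
  rcases lt_trichotomy x 0 with hx | hx | hx
  · rw [if_neg (not_le.mpr hx), indicator_of_notMem (by simpa using hx.le)]
    simp
  · subst hx; simp
  · rw [if_pos hx.le, indicator_of_mem (by simpa using hx)]
    rw [ENNReal.toReal_ofReal (by positivity)]
    ring_nf

lemma integrableOn_exp_mul : IntegrableOn (fun x : ℝ => Real.exp (-x) * x) (Ioi 0) := by
  have := Real.GammaIntegral_convergent (s := 2) (by norm_num)
  refine this.congr_fun (fun x hx => ?_) measurableSet_Ioi
  norm_num

lemma measurable_exponentialPDF (r : ℝ) : Measurable (exponentialPDF r) :=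
  (measurable_exponentialPDFReal r).ennreal_ofReal

lemma integrable_id_expMeasure_one : Integrable id (expMeasure 1) := by
  rw [show expMeasure 1 = volume.withDensity (exponentialPDF 1) from rfl]
  rw [integrable_withDensity_iff (measurable_exponentialPDF 1)
    (ae_of_all _ fun x => ENNReal.ofReal_lt_top)]
  have : (fun x : ℝ => id x * (exponentialPDF 1 x).toReal)
      = Set.indicator (Ioi (0:ℝ)) (fun x => Real.exp (-x) * x) := exp_indicator_eq
  rw [this]
  exact integrableOn_exp_mul.integrable_indicator measurableSet_Ioi

lemma integral_id_expMeasure_one : ∫ x, x ∂(expMeasure 1) = 1 := by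
  have hpdf := measurable_exponentialPDF 1
  have hmeq : expMeasure 1
      = volume.withDensity (fun x => ((exponentialPDF 1 x).toNNReal : ℝ≥0∞)) := by
    rw [show expMeasure 1 = volume.withDensity (exponentialPDF 1) from rfl]
    exact withDensity_congr_ae (ae_of_all _ fun x =>
      (ENNReal.coe_toNNReal ENNReal.ofReal_ne_top).symm)
  rw [hmeq, integral_withDensity_eq_integral_smul hpdf.ennreal_toNNReal]
  have : (fun x : ℝ => ((exponentialPDF 1 x).toNNReal : ℝ≥0) • x)
      = Set.indicator (Ioi (0:ℝ)) (fun x => Real.exp (-x) * x) := by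
    rw [← exp_indicator_eq]
    funext x
    rw [NNReal.smul_def, smul_eq_mul, mul_comm]
    congr 1
  rw [this, integral_indicator measurableSet_Ioi]
  have hG : Real.Gamma 2 = ∫ x in Ioi (0:ℝ), Real.exp (-x) * x := by
    rw [Real.Gamma_eq_integral (by norm_num : (0:ℝ) < 2)]
    norm_num
  rw [← hG]
  rw [show (2:ℝ) = (1:ℕ) + 1 by norm_num, Real.Gamma_nat_eq_factorial]
  norm_num

end AtlasAux

section AtlasAux2

open Finset

lemma abel_id (a : ℕ → ℝ) (n : ℕ) :
    ∑ k ∈ Finset.range n, a k / ((k : ℝ) + 1)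
      = (∑ k ∈ Finset.range n, a k) / n
        + ∑ k ∈ Finset.range n, ((∑ j ∈ Finset.range k, a j) / k) / ((k : ℝ) + 1) := by
  induction n with
  | zero => simp
  | succ n ih =>
    rw [Finset.sum_range_succ (f := fun k => a k / ((k : ℝ) + 1)), ih,
      Finset.sum_range_succ (f := fun k => ((∑ j ∈ Finset.range k, a j) / k) / ((k : ℝ) + 1)),
      Finset.sum_range_succ a]
    rcases Nat.eq_zero_or_pos n with hn | hn
    · subst hn; simp
    · have h1 : (n : ℝ) ≠ 0 := Nat.cast_ne_zero.mpr hn.ne'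
      have h2 : (n : ℝ) + 1 ≠ 0 := by positivity
      push_cast
      field_simp
      ring

lemma harmonic_div_log :
    Tendsto (fun n : ℕ => (∑ k ∈ Finset.range n, ((k : ℝ) + 1)⁻¹) / Real.log n)
      atTop (nhds 1) := by
  have hH : ∀ n : ℕ, ∑ k ∈ Finset.range n, ((k : ℝ) + 1)⁻¹ = (harmonic n : ℝ) := by
    intro n
    rw [harmonic]
    push_cast
    rfl
  have h1 := Real.tendsto_harmonic_sub_log
  have hlog : Tendsto (fun n : ℕ => (Real.log n)⁻¹) atTop (nhds 0) :=
    (Real.tendsto_log_atTop.comp tendsto_natCast_atTop_atTop).inv_tendsto_atTop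
  have h2 : Tendsto (fun n : ℕ =>
      ((harmonic n : ℝ) - Real.log n) * (Real.log n)⁻¹ + 1) atTop
      (nhds (Real.eulerMascheroniConstant * 0 + 1)) := (h1.mul hlog).add_const 1
  rw [mul_zero, zero_add] at h2
  refine h2.congr' ?_
  filter_upwards [eventually_ge_atTop 2] with n hn
  have hlogne : Real.log n ≠ 0 :=
    ne_of_gt (Real.log_pos (by exact_mod_cast Nat.one_lt_cast.mpr hn))
  rw [hH]
  field_simp
  ring

lemma weighted_cesaro (a : ℕ → ℝ) (L : ℝ)
    (h : Tendsto (fun n : ℕ => (∑ k ∈ Finset.range n, a k) / n) atTop (nhds L)) :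
    Tendsto (fun n : ℕ => (∑ k ∈ Finset.range n, a k / ((k : ℝ) + 1)) / Real.log n)
      atTop (nhds L) := by
  set b : ℕ → ℝ := fun k => (∑ j ∈ Finset.range k, a j) / k with hb
  set g : ℕ → ℝ := fun k => ((k : ℝ) + 1)⁻¹ with hg
  set G : ℕ → ℝ := fun n => ∑ k ∈ Finset.range n, g k with hG
  have hg0 : ∀ k, 0 ≤ g k := fun k => by positivity
  have hGtop : Tendsto G atTop atTop := by
    have := Real.tendsto_sum_range_one_div_nat_succ_atTop
    simpa [hG, hg, one_div] using this
  have hb0 : Tendsto (fun k => b k - L) atTop (nhds 0) := by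
    simpa using h.sub (tendsto_const_nhds (x := L))
  have hlo : (fun k => (b k - L) * g k) =o[atTop] g := by
    simpa using (Asymptotics.isLittleO_one_iff ℝ |>.2 hb0).mul_isBigO
      (Asymptotics.isBigO_refl g atTop)
  have hsum := hlo.sum_range hg0 hGtop
  have hdiv0 : Tendsto (fun n => (∑ k ∈ Finset.range n, (b k - L) * g k) / G n)
      atTop (nhds 0) := hsum.tendsto_div_nhds_zero
  have hTG : Tendsto (fun n => (∑ k ∈ Finset.range n, b k * g k) / G n) atTop (nhds L) := by
    have hsplit : ∀ n, (∑ k ∈ Finset.range n, b k * g k)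
        = (∑ k ∈ Finset.range n, (b k - L) * g k) + L * G n := by
      intro n
      rw [hG, Finset.mul_sum, ← Finset.sum_add_distrib]
      exact Finset.sum_congr rfl fun k _ => by ring
    have h2 : Tendsto (fun n => (∑ k ∈ Finset.range n, (b k - L) * g k) / G n + L)
        atTop (nhds (0 + L)) := hdiv0.add_const L
    rw [zero_add] at h2
    refine h2.congr' ?_
    filter_upwards [hGtop.eventually_ge_atTop 1] with n hn
    have hGne : G n ≠ 0 := by linarith
    rw [hsplit n, add_div, mul_div_assoc, div_self hGne, mul_one]
  have hGlog : Tendsto (fun n : ℕ => G n / Real.log n) atTop (nhds 1) := harmonic_div_log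
  have hlog : Tendsto (fun n : ℕ => (Real.log n)⁻¹) atTop (nhds 0) :=
    (Real.tendsto_log_atTop.comp tendsto_natCast_atTop_atTop).inv_tendsto_atTop
  have hlim1 : Tendsto (fun n : ℕ => ((∑ k ∈ Finset.range n, a k) / n) * (Real.log n)⁻¹)
      atTop (nhds (L * 0)) := h.mul hlog
  rw [mul_zero] at hlim1
  have hlim2 : Tendsto (fun n : ℕ =>
      ((∑ k ∈ Finset.range n, b k * g k) / G n) * (G n / Real.log n)) atTop
      (nhds (L * 1)) := hTG.mul hGlog
  rw [mul_one] at hlim2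
  have hfin := hlim1.add hlim2
  rw [zero_add] at hfin
  refine hfin.congr' ?_
  filter_upwards [hGtop.eventually_ge_atTop 1] with n hn
  have hGne : G n ≠ 0 := by linarith
  have hsplit2 : ∑ k ∈ Finset.range n, a k / ((k : ℝ) + 1)
      = (∑ k ∈ Finset.range n, a k) / n + ∑ k ∈ Finset.range n, b k * g k := by
    rw [abel_id a n]
    congr 1
  rw [hsplit2, add_div, div_div, ← div_eq_mul_inv, div_div,
    div_mul_div_comm, mul_comm (∑ k ∈ Finset.range n, b k * g k) (G n),
    mul_div_mul_left _ _ hGne]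

lemma log_pred_div_log :
    Tendsto (fun n : ℕ => Real.log ((n - 1 : ℕ) : ℝ) / Real.log n) atTop (nhds 1) := by
  have hpred : Tendsto (fun n : ℕ => ((n - 1 : ℕ) : ℝ)) atTop atTop :=
    tendsto_natCast_atTop_atTop.comp (tendsto_sub_atTop_nat 1)
  have hinvpred : Tendsto (fun n : ℕ => ((n - 1 : ℕ) : ℝ)⁻¹) atTop (nhds 0) :=
    hpred.inv_tendsto_atTop
  have harg : Tendsto (fun n : ℕ => 1 + ((n - 1 : ℕ) : ℝ)⁻¹) atTop (nhds 1) := by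
    simpa using (tendsto_const_nhds (x := (1:ℝ))).add hinvpred
  have hlog1 : Tendsto (fun n : ℕ => Real.log (1 + ((n - 1 : ℕ) : ℝ)⁻¹)) atTop (nhds 0) := by
    have := ((Real.continuousAt_log one_ne_zero).tendsto).comp harg
    rw [Real.log_one] at this
    exact this
  have hdiff : Tendsto (fun n : ℕ => Real.log n - Real.log ((n - 1 : ℕ) : ℝ)) atTop (nhds 0) := by
    refine hlog1.congr' ?_
    filter_upwards [eventually_ge_atTop 2] with n hn
    have h2 : (2 : ℝ) ≤ (n : ℝ) := by exact_mod_cast hn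
    rw [Nat.cast_sub (by omega : 1 ≤ n), Nat.cast_one]
    have hx0 : (n : ℝ) ≠ 0 := by linarith
    have hx1 : (n : ℝ) - 1 ≠ 0 := by linarith
    rw [← Real.log_div hx0 hx1]
    congr 1
    field_simp
    ring
  have hinvlog : Tendsto (fun n : ℕ => (Real.log n)⁻¹) atTop (nhds 0) :=
    (Real.tendsto_log_atTop.comp tendsto_natCast_atTop_atTop).inv_tendsto_atTop
  have hmul : Tendsto (fun n : ℕ =>
      1 - (Real.log n - Real.log ((n - 1 : ℕ) : ℝ)) * (Real.log n)⁻¹) atTop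
      (nhds (1 - 0 * 0)) := tendsto_const_nhds.sub (hdiff.mul hinvlog)
  rw [mul_zero, sub_zero] at hmul
  refine hmul.congr' ?_
  filter_upwards [eventually_ge_atTop 3] with n hn
  have hlogne : Real.log n ≠ 0 :=
    ne_of_gt (Real.log_pos (by exact_mod_cast Nat.one_lt_cast.mpr (by omega)))
  field_simp
  ring

end AtlasAux2

/-- Almost surely, `log Y_n / log n → −α`, where `Y_n = exp(−(E_1 + ⋯ + E_{n−1}))` and
the `E_k` are independent, exponentially distributed with rate `k/α`.
Here `E k` stands for the variable of index `k + 1`. -/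
theorem atlas_pareto_log_log_slope
    {Ω : Type*} [MeasureSpace Ω] [IsProbabilityMeasure (ℙ : Measure Ω)]
    (α : ℝ) (hα : 0 < α) (E : ℕ → Ω → ℝ)
    (hmeas : ∀ k, Measurable (E k))
    (hindep : iIndepFun E ℙ)
    (hdist : ∀ k : ℕ, Measure.map (E k) ℙ = expMeasure ((k + 1) / α))
    (Y : ℕ → Ω → ℝ)
    (hY : ∀ n : ℕ, ∀ ω, Y n ω = Real.exp (-(∑ k ∈ Finset.range (n - 1), E k ω))) :
    ∀ᵐ ω ∂(ℙ : Measure Ω),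
      Tendsto (fun n : ℕ => Real.log (Y n ω) / Real.log n) atTop (nhds (-α)) := by
  set F : ℕ → Ω → ℝ := fun k ω => (((k : ℝ) + 1) / α) * E k ω with hF
  have hc : ∀ k : ℕ, (0:ℝ) < ((k : ℝ) + 1) / α := fun k => by positivity
  have hFmeas : ∀ k, Measurable (F k) := fun k => (hmeas k).const_mul _
  have hmap : ∀ k, Measure.map (F k) ℙ = expMeasure 1 := by
    intro k
    have hcomp : F k = (fun x => (((k : ℝ) + 1) / α) * x) ∘ E k := rfl
    have hmc : Measurable fun x : ℝ => (((k : ℝ) + 1) / α) * x := by fun_prop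
    rw [hcomp, ← Measure.map_map hmc (hmeas k), hdist k,
      map_mul_expMeasure (hc k) (hc k), div_self (hc k).ne']
  have hint : Integrable (F 0) ℙ := by
    have h0 : Integrable id (Measure.map (F 0) ℙ) := by
      rw [hmap 0]; exact integrable_id_expMeasure_one
    exact (integrable_map_measure aestronglyMeasurable_id
      (hFmeas 0).aemeasurable).mp h0
  have hident : ∀ i, IdentDistrib (F i) (F 0) ℙ ℙ := fun i =>
    ⟨(hFmeas i).aemeasurable, (hFmeas 0).aemeasurable, by rw [hmap i, hmap 0]⟩
  have hindep' : Pairwise (Function.onFun (IndepFun · · ℙ) F) := fun i j hij =>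
    (hindep.indepFun hij).comp (measurable_id.const_mul _) (measurable_id.const_mul _)
  have hexp : (ℙ : Measure Ω)[F 0] = 1 := by
    have := integral_map (μ := (ℙ : Measure Ω)) (hFmeas 0).aemeasurable
      (f := fun x : ℝ => x) aestronglyMeasurable_id
    rw [hmap 0, integral_id_expMeasure_one] at this
    exact this.symm
  have hSLLN := strong_law_ae_real F hint hindep' hident
  rw [hexp] at hSLLN
  filter_upwards [hSLLN] with ω hω
  -- deterministic part
  have ha : Tendsto (fun n : ℕ =>
      (∑ k ∈ Finset.range n, ((k : ℝ) + 1) * E k ω) / n) atTop (nhds α) := by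
    have h1 := hω.const_mul α
    rw [mul_one] at h1
    refine h1.congr fun n => ?_
    rw [← mul_div_assoc, Finset.mul_sum]
    congr 1
    refine Finset.sum_congr rfl fun k _ => ?_
    rw [hF]
    field_simp
  have hkey := weighted_cesaro (fun k => ((k : ℝ) + 1) * E k ω) α ha
  have hS : Tendsto (fun n : ℕ => (∑ k ∈ Finset.range n, E k ω) / Real.log n)
      atTop (nhds α) := by
    refine hkey.congr fun n => ?_
    congr 1
    exact Finset.sum_congr rfl fun k _ =>
      mul_div_cancel_left₀ _ (by positivity : ((k : ℝ) + 1) ≠ 0)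
  have hS' : Tendsto (fun n : ℕ =>
      (∑ k ∈ Finset.range (n - 1), E k ω) / Real.log ((n - 1 : ℕ) : ℝ)) atTop (nhds α) :=
    hS.comp (tendsto_sub_atTop_nat 1)
  have hfinal : Tendsto (fun n : ℕ =>
      (∑ k ∈ Finset.range (n - 1), E k ω) / Real.log n) atTop (nhds (α * 1)) := by
    refine (hS'.mul log_pred_div_log).congr' ?_
    filter_upwards [eventually_ge_atTop 3] with n hn
    have hlogne : Real.log ((n - 1 : ℕ) : ℝ) ≠ 0 := by
      refine ne_of_gt (Real.log_pos ?_)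
      have h2 : 1 < n - 1 := by omega
      exact_mod_cast h2
    rw [div_mul_div_comm, mul_comm (Real.log ((n - 1 : ℕ) : ℝ)) (Real.log (n : ℝ)),
      mul_comm (Real.log (n : ℝ)) (Real.log ((n - 1 : ℕ) : ℝ)), ← div_div,
      mul_div_cancel_right₀ _ hlogne]
  rw [mul_one] at hfinal
  have hlogY : ∀ n, Real.log (Y n ω) = -(∑ k ∈ Finset.range (n - 1), E k ω) := fun n => by
    rw [hY n ω, Real.log_exp]
  refine hfinal.neg.congr fun n => ?_
  rw [hlogY n, neg_div]
end

section
/- Almost surely, lim_{n→∞} n·Y_n/(Y_1 + Y_2 + ⋯ + Y_n) = 0. -/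
open MeasureTheory ProbabilityTheory Filter Real Set
open scoped ENNReal NNReal

set_option linter.unusedSectionVars false
set_option linter.unusedVariables false
set_option maxHeartbeats 1000000

section ZacAux


lemma zac_expMeasure_Iio (r : ℝ) : expMeasure r (Iio 0) = 0 := by
  rw [expMeasure, gammaMeasure, withDensity_apply _ measurableSet_Iio]
  exact lintegral_gammaPDF_of_nonpos le_rfl

lemma zac_ae_nonneg (r : ℝ) : ∀ᵐ x ∂(expMeasure r), 0 ≤ x := by
  rw [ae_iff]
  convert zac_expMeasure_Iio r using 2
  ext x; simp [not_le]

lemma zac_integrable_exp {r : ℝ} (hr : 0 < r) (t : ℝ) (ht : t ≤ 0) :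
    Integrable (fun x => Real.exp (t * x)) (expMeasure r) := by
  have : IsProbabilityMeasure (expMeasure r) := isProbabilityMeasure_expMeasure hr
  refine Integrable.mono' (integrable_const 1) ?_ ?_
  · exact (by fun_prop : Measurable fun x : ℝ => Real.exp (t*x)).aestronglyMeasurable
  · filter_upwards [zac_ae_nonneg r] with x hx
    rw [Real.norm_eq_abs, abs_of_pos (Real.exp_pos _)]
    exact Real.exp_le_one_iff.mpr (mul_nonpos_of_nonpos_of_nonneg ht hx)

lemma zac_integral_exp {r : ℝ} (hr : 0 < r) (t : ℝ) (ht : t ≤ 0) :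
    ∫ x, Real.exp (t * x) ∂(expMeasure r) = r / (r - t) := by
  have hrt : 0 < r - t := by linarith
  have hm : Measurable fun x : ℝ => Real.exp (t * x) := by fun_prop
  rw [integral_eq_lintegral_of_nonneg_ae (ae_of_all _ fun x => (Real.exp_pos _).le)
    hm.aestronglyMeasurable]
  rw [expMeasure, gammaMeasure, lintegral_withDensity_eq_lintegral_mul _
    (show Measurable (gammaPDF 1 r) from (measurable_gammaPDFReal 1 r).ennreal_ofReal) hm.ennreal_ofReal]
  have h0 : ∀ᵐ x : ℝ, x ≠ (0:ℝ) := by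
    refine ae_iff.mpr ?_
    simp
  have hsplit : ∀ᵐ x : ℝ, (gammaPDF 1 r x * ENNReal.ofReal (Real.exp (t * x)) : ℝ≥0∞)
      = (Ioi (0:ℝ)).indicator (fun x => ENNReal.ofReal (r * Real.exp ((t - r) * x))) x := by
    filter_upwards [h0] with x hx0
    rcases lt_trichotomy x 0 with hx | hx | hx
    · rw [Set.indicator_of_notMem (by simpa using hx.le), gammaPDF_of_neg hx, zero_mul]
    · exact absurd hx hx0
    · rw [Set.indicator_of_mem (Set.mem_Ioi.mpr hx), gammaPDF_of_nonneg hx.le]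
      rw [← ENNReal.ofReal_mul (by positivity)]
      congr 1
      rw [Real.rpow_one, Real.Gamma_one, sub_self, Real.rpow_zero, div_one, mul_one,
        mul_assoc, ← Real.exp_add]
      ring_nf
  simp only [Pi.mul_apply]
  rw [lintegral_congr_ae hsplit, lintegral_indicator measurableSet_Ioi _]
  have hbase : ∫ x in Ioi (0:ℝ), Real.exp (-((r - t) * x)) = 1 / (r - t) := by
    have := Real.integral_rpow_mul_exp_neg_mul_Ioi (a := 1) (r := r - t) one_pos hrt
    simpa using this
  have hint : IntegrableOn (fun x => Real.exp (-((r - t) * x))) (Ioi (0:ℝ)) := by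
    have := integrableOn_rpow_mul_exp_neg_mul_rpow (s := 0) (p := 1) (b := r - t)
      (by norm_num) one_pos hrt
    apply this.congr_fun ?_ measurableSet_Ioi
    intro x _
    simp only [Real.rpow_one, Real.rpow_zero, one_mul, neg_mul]
  have heq : ∀ x : ℝ, r * Real.exp ((t - r) * x) = r * Real.exp (-((r - t) * x)) := by
    intro x; ring_nf
  simp_rw [heq]
  rw [← ofReal_integral_eq_lintegral_ofReal (hint.const_mul r)
      (ae_of_all _ fun x => by positivity)]
  rw [integral_const_mul, hbase, ENNReal.toReal_ofReal (by positivity)]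
  field_simp


section
variable {Ω : Type*} [MeasureSpace Ω] [IsProbabilityMeasure (ℙ : Measure Ω)]

lemma zac_int {X : Ω → ℝ} (hX : Measurable X) {r : ℝ} (hr : 0 < r)
    (hd : Measure.map X ℙ = expMeasure r) (t : ℝ) (ht : t ≤ 0) :
    Integrable (fun ω => Real.exp (t * X ω)) ℙ := by
  have hm : Measurable fun x : ℝ => Real.exp (t * x) := by fun_prop
  have := (integrable_map_measure (hm.aestronglyMeasurable.mono_measure le_rfl)
      hX.aemeasurable (μ := ℙ)).mp
  rw [hd] at this
  exact this (zac_integrable_exp hr t ht)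

lemma zac_mgf {X : Ω → ℝ} (hX : Measurable X) {r : ℝ} (hr : 0 < r)
    (hd : Measure.map X ℙ = expMeasure r) (t : ℝ) (ht : t ≤ 0) :
    mgf X ℙ t = r / (r - t) := by
  have hm : Measurable fun x : ℝ => Real.exp (t * x) := by fun_prop
  rw [mgf, ← zac_integral_exp hr t ht, ← hd,
    integral_map hX.aemeasurable hm.aestronglyMeasurable]

lemma zac_chernoff (E : ℕ → Ω → ℝ) (hmeas : ∀ k, Measurable (E k))
    (hindep : iIndepFun E ℙ)
    (hdist : ∀ k : ℕ, Measure.map (E k) ℙ = expMeasure (k + 1))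
    (s : Finset ℕ) (K : ℕ) (a : ℝ) :
    ℙ {ω | ∑ l ∈ s, E l ω ≤ a} ≤
      ENNReal.ofReal (Real.exp (K * a) * ∏ l ∈ s, (((l:ℝ)+1)/((l:ℝ)+1+K))) := by
  have ht : (-(K:ℝ)) ≤ 0 := neg_nonpos.mpr (Nat.cast_nonneg K)
  have hrl : ∀ l : ℕ, (0:ℝ) < (l:ℝ) + 1 := fun l => by positivity
  have hint : ∀ l ∈ s, Integrable (fun ω => Real.exp (-(K:ℝ) * E l ω)) ℙ :=
    fun l _ => zac_int (hmeas l) (hrl l) (hdist l) _ ht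
  have hX := hindep.integrable_exp_mul_sum hmeas hint
  have hch := measure_le_le_exp_mul_mgf (X := ∑ l ∈ s, E l) (μ := ℙ) a ht hX
  have hmgf : mgf (∑ l ∈ s, E l) ℙ (-(K:ℝ)) = ∏ l ∈ s, (((l:ℝ)+1)/((l:ℝ)+1+K)) := by
    rw [hindep.mgf_sum hmeas s]
    refine Finset.prod_congr rfl fun l _ => ?_
    rw [zac_mgf (hmeas l) (hrl l) (hdist l) _ ht]
    ring_nf
  rw [hmgf, neg_neg] at hch
  have hset : {ω | ∑ l ∈ s, E l ω ≤ a} = {ω | (∑ l ∈ s, E l) ω ≤ a} := by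
    ext ω; simp [Finset.sum_apply]
  rw [hset, ← ENNReal.ofReal_toReal (measure_ne_top ℙ _)]
  exact ENNReal.ofReal_le_ofReal hch

end


lemma zac_sq_le (j : ℕ) : j^2 ≤ 2^(j+1) := by
  induction j with
  | zero => norm_num
  | succ j ih =>
    have h1 : j < 2^j := Nat.lt_two_pow_self
    have : (j+1)^2 = j^2 + (2*j+1) := by ring
    calc (j+1)^2 = j^2 + (2*j+1) := by ring
    _ ≤ 2^(j+1) + (2*j+2) := by omega
    _ ≤ 2^(j+1) + 2^(j+1) := by omega
    _ = 2^(j+2) := by ring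

lemma zac_telescope (f : ℕ → ℝ) {A B : ℕ} (hAB : A ≤ B) :
    ∑ l ∈ Finset.Ico A B, (f (l+1) - f l) = f B - f A := by
  rw [Finset.sum_Ico_eq_sum_range]
  have := Finset.sum_range_sub (fun i => f (A + i)) (B - A)
  simp only [← add_assoc] at this
  rw [this, Nat.add_sub_cancel' hAB, Nat.add_zero]

lemma zac_prod_bound {A B : ℕ} (hAB : A ≤ B) (K : ℕ) :
    ∏ l ∈ Finset.Ico A B, (((l:ℝ)+1)/((l:ℝ)+1+K)) ≤
      Real.exp (-(K:ℝ) * (Real.log ((B:ℝ)+1+K) - Real.log ((A:ℝ)+1+K))) := by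
  have key : ∀ l : ℕ, ((l:ℝ)+1)/((l:ℝ)+1+K) ≤
      Real.exp (-(K:ℝ) * (Real.log ((l:ℝ)+1+1+K) - Real.log ((l:ℝ)+1+K))) := by
    intro l
    have hpos : (0:ℝ) < (l:ℝ)+1+K := by positivity
    have hlog : Real.log ((l:ℝ)+1+1+K) - Real.log ((l:ℝ)+1+K) ≤ 1/((l:ℝ)+1+K) := by
      rw [← Real.log_div (by positivity) (by positivity)]
      have := Real.log_le_sub_one_of_pos
        (show (0:ℝ) < ((l:ℝ)+1+1+K)/((l:ℝ)+1+K) by positivity)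
      have heq : ((l:ℝ)+1+1+K)/((l:ℝ)+1+K) - 1 = 1/((l:ℝ)+1+K) := by
        field_simp
        ring
      linarith
    have h1 : ((l:ℝ)+1)/((l:ℝ)+1+K) ≤ Real.exp (-(K:ℝ)/((l:ℝ)+1+K)) := by
      have := Real.add_one_le_exp (-(K:ℝ)/((l:ℝ)+1+K))
      have heq : ((l:ℝ)+1)/((l:ℝ)+1+K) = -(K:ℝ)/((l:ℝ)+1+K) + 1 := by field_simp; ring
      rw [heq]; exact this
    refine h1.trans (Real.exp_le_exp.mpr ?_)
    rw [neg_mul, neg_div, neg_le_neg_iff]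
    calc (K:ℝ) * (Real.log ((l:ℝ)+1+1+K) - Real.log ((l:ℝ)+1+K))
        ≤ (K:ℝ) * (1/((l:ℝ)+1+K)) := by
          apply mul_le_mul_of_nonneg_left hlog (Nat.cast_nonneg K)
    _ = (K:ℝ)/((l:ℝ)+1+K) := by ring
  calc ∏ l ∈ Finset.Ico A B, (((l:ℝ)+1)/((l:ℝ)+1+K))
      ≤ ∏ l ∈ Finset.Ico A B,
          Real.exp (-(K:ℝ) * (Real.log ((l:ℝ)+1+1+K) - Real.log ((l:ℝ)+1+K))) := by
        apply Finset.prod_le_prod (fun l _ => by positivity) (fun l _ => key l)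
  _ = Real.exp (∑ l ∈ Finset.Ico A B,
        (-(K:ℝ)) * (Real.log ((l:ℝ)+1+1+K) - Real.log ((l:ℝ)+1+K))) := by
        rw [Real.exp_sum]
  _ ≤ Real.exp (-(K:ℝ) * (Real.log ((B:ℝ)+1+K) - Real.log ((A:ℝ)+1+K))) := by
        rw [Real.exp_le_exp, ← Finset.mul_sum]
        have := zac_telescope (fun l => Real.log ((l:ℝ)+1+K)) hAB
        push_cast at this
        rw [this]

lemma zac_numeric {i j : ℕ} (hij : i ≤ j) :
    Real.exp ((j:ℝ) * ((i:ℝ) * Real.log 2 - 1)) *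
      ∏ l ∈ Finset.Ico (2^(j-i)-1 : ℕ) (2^j-1 : ℕ), (((l:ℝ)+1)/((l:ℝ)+1+j)) ≤
    Real.exp ((2:ℝ)^(i+1)) * Real.exp (-(j:ℝ)) := by
  have hAB : (2^(j-i)-1 : ℕ) ≤ 2^j - 1 :=
    Nat.sub_le_sub_right (Nat.pow_le_pow_right (by norm_num) (Nat.sub_le j i)) 1
  have hA : ((2^(j-i)-1 : ℕ):ℝ) + 1 = (2:ℝ)^(j-i) := by
    have h1 : (1:ℕ) ≤ 2^(j-i) := Nat.one_le_two_pow
    push_cast [h1]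
    ring
  have hB : ((2^j-1 : ℕ):ℝ) + 1 = (2:ℝ)^j := by
    have h1 : (1:ℕ) ≤ 2^j := Nat.one_le_two_pow
    push_cast [h1]
    ring
  have hprod := zac_prod_bound hAB j
  rw [hA, hB] at hprod
  -- main exponent estimate
  have h2j : (0:ℝ) < (2:ℝ)^j := by positivity
  have h2i : (0:ℝ) < (2:ℝ)^i := by positivity
  set c : ℝ := (2:ℝ)^i * (j:ℝ) / (2:ℝ)^j with hc_def
  have hc0 : 0 ≤ c := by positivity
  have e1 : Real.log ((2:ℝ)^j) ≤ Real.log ((2:ℝ)^j + (j:ℝ)) :=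
    Real.log_le_log h2j (by linarith [Nat.cast_nonneg (α := ℝ) j])
  have e2 : Real.log ((2:ℝ)^(j-i) + (j:ℝ)) =
      Real.log ((2:ℝ)^j + (2:ℝ)^i * (j:ℝ)) - (i:ℝ) * Real.log 2 := by
    have hm : (2:ℝ)^i * ((2:ℝ)^(j-i) + (j:ℝ)) = (2:ℝ)^j + (2:ℝ)^i * (j:ℝ) := by
      rw [mul_add, ← pow_add]
      congr 2
      omega
    rw [← hm, Real.log_mul (by positivity) (by positivity), Real.log_pow]
    ring
  have e3 : Real.log ((2:ℝ)^j + (2:ℝ)^i * (j:ℝ)) = Real.log ((2:ℝ)^j) + Real.log (1 + c) := by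
    have hm : (2:ℝ)^j + (2:ℝ)^i * (j:ℝ) = (2:ℝ)^j * (1 + c) := by
      rw [hc_def]; field_simp
    rw [hm, Real.log_mul (by positivity) (by positivity)]
  have e4 : Real.log (1 + c) ≤ c := by
    have := Real.log_le_sub_one_of_pos (show (0:ℝ) < 1 + c by linarith)
    linarith
  have hX : (i:ℝ) * Real.log 2 - 1 + Real.log ((2:ℝ)^(j-i) + (j:ℝ))
      - Real.log ((2:ℝ)^j + (j:ℝ)) ≤ -1 + c := by
    rw [e2, e3]
    linarith
  have hjc : (j:ℝ) * c ≤ (2:ℝ)^(i+1) := by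
    have hsq : ((j:ℝ))^2 ≤ (2:ℝ)^(j+1) := by
      have := zac_sq_le j
      calc ((j:ℝ))^2 = ((j^2 : ℕ) : ℝ) := by push_cast; ring
      _ ≤ ((2^(j+1) : ℕ) : ℝ) := by exact_mod_cast this
      _ = (2:ℝ)^(j+1) := by push_cast; ring
    have : (j:ℝ) * c = (2:ℝ)^i * ((j:ℝ))^2 / (2:ℝ)^j := by rw [hc_def]; ring
    rw [this, div_le_iff₀ h2j]
    calc (2:ℝ)^i * ((j:ℝ))^2 ≤ (2:ℝ)^i * (2:ℝ)^(j+1) :=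
      mul_le_mul_of_nonneg_left hsq h2i.le
    _ = (2:ℝ)^(i+1) * (2:ℝ)^j := by rw [← pow_add, ← pow_add]; congr 1; omega
  have hexp : (j:ℝ) * ((i:ℝ) * Real.log 2 - 1) +
      (-(j:ℝ)) * (Real.log ((2:ℝ)^j + (j:ℝ)) - Real.log ((2:ℝ)^(j-i) + (j:ℝ)))
      ≤ (2:ℝ)^(i+1) - (j:ℝ) := by
    have hj0 : (0:ℝ) ≤ (j:ℝ) := Nat.cast_nonneg j
    have := mul_le_mul_of_nonneg_left hX hj0
    nlinarith
  calc Real.exp ((j:ℝ) * ((i:ℝ) * Real.log 2 - 1)) *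
        ∏ l ∈ Finset.Ico (2^(j-i)-1 : ℕ) (2^j-1 : ℕ), (((l:ℝ)+1)/((l:ℝ)+1+j))
      ≤ Real.exp ((j:ℝ) * ((i:ℝ) * Real.log 2 - 1)) *
        Real.exp (-(j:ℝ) * (Real.log ((2:ℝ)^j + (j:ℝ)) - Real.log ((2:ℝ)^(j-i) + (j:ℝ)))) :=
      mul_le_mul_of_nonneg_left hprod (Real.exp_pos _).le
  _ = Real.exp ((j:ℝ) * ((i:ℝ) * Real.log 2 - 1) +
        (-(j:ℝ)) * (Real.log ((2:ℝ)^j + (j:ℝ)) - Real.log ((2:ℝ)^(j-i) + (j:ℝ)))) := by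
      rw [← Real.exp_add]
  _ ≤ Real.exp ((2:ℝ)^(i+1) - (j:ℝ)) := Real.exp_le_exp.mpr hexp
  _ = Real.exp ((2:ℝ)^(i+1)) * Real.exp (-(j:ℝ)) := by rw [← Real.exp_add]; ring_nf


lemma zac_bc {Ω : Type*} [MeasureSpace Ω] [IsProbabilityMeasure (ℙ : Measure Ω)]
    (E : ℕ → Ω → ℝ) (hmeas : ∀ k, Measurable (E k))
    (hindep : iIndepFun E ℙ)
    (hdist : ∀ k : ℕ, Measure.map (E k) ℙ = expMeasure (k + 1)) :
    ∀ᵐ ω ∂(ℙ : Measure Ω), ∀ i : ℕ, ∀ᶠ j in atTop,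
      (i:ℝ) * Real.log 2 - 1 <
        ∑ l ∈ Finset.Ico (2^(j-i)-1 : ℕ) (2^j-1 : ℕ), E l ω := by
  rw [ae_all_iff]
  intro i
  set s : ℕ → Set Ω := fun m =>
    {ω | ∑ l ∈ Finset.Ico (2^m-1 : ℕ) (2^(m+i)-1 : ℕ), E l ω ≤ (i:ℝ) * Real.log 2 - 1} with hs
  have hbound : ∀ m : ℕ, ℙ (s m) ≤
      ENNReal.ofReal (Real.exp ((2:ℝ)^(i+1))) * ENNReal.ofReal (Real.exp (-1)) ^ m := by
    intro m
    have h1 := zac_chernoff E hmeas hindep hdist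
      (Finset.Ico (2^m-1 : ℕ) (2^(m+i)-1 : ℕ)) (m+i) ((i:ℝ) * Real.log 2 - 1)
    have h2 := zac_numeric (i := i) (j := m + i) (by omega)
    rw [show (m+i)-i = m by omega] at h2
    calc ℙ (s m) ≤ ENNReal.ofReal (Real.exp ((2:ℝ)^(i+1)) * Real.exp (-((m+i : ℕ):ℝ))) :=
      h1.trans (ENNReal.ofReal_le_ofReal h2)
    _ ≤ ENNReal.ofReal (Real.exp ((2:ℝ)^(i+1)) * Real.exp (-1) ^ m) := by
        apply ENNReal.ofReal_le_ofReal
        have hh : Real.exp (-((m+i:ℕ):ℝ)) ≤ Real.exp (-1) ^ m := by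
          rw [← Real.exp_nat_mul]
          apply Real.exp_le_exp.mpr
          push_cast
          linarith [Nat.cast_nonneg (α := ℝ) i]
        exact mul_le_mul_of_nonneg_left hh (Real.exp_pos _).le
    _ = ENNReal.ofReal (Real.exp ((2:ℝ)^(i+1))) * ENNReal.ofReal (Real.exp (-1)) ^ m := by
        rw [ENNReal.ofReal_mul (Real.exp_pos _).le, ENNReal.ofReal_pow (Real.exp_pos _).le]
  have hr1 : ENNReal.ofReal (Real.exp (-1)) < 1 := by
    rw [← ENNReal.ofReal_one]
    exact ENNReal.ofReal_lt_ofReal_iff_of_nonneg (Real.exp_pos _).le |>.mpr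
      (Real.exp_lt_one_iff.mpr (by norm_num))
  have hsum : ∑' m, ℙ (s m) ≠ ⊤ := by
    refine ne_top_of_le_ne_top ?_ (ENNReal.tsum_le_tsum hbound)
    rw [ENNReal.tsum_mul_left, ENNReal.tsum_geometric]
    exact ENNReal.mul_ne_top ENNReal.ofReal_ne_top
      (ENNReal.inv_ne_top.mpr (by rw [ne_eq, tsub_eq_zero_iff_le]; exact hr1.not_ge))
  have hae := ae_eventually_notMem hsum
  filter_upwards [hae] with ω hω
  rw [eventually_atTop] at hω ⊢
  obtain ⟨M, hM⟩ := hω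
  refine ⟨M + i, fun j hj => ?_⟩
  have hm := hM (j - i) (by omega)
  have hji : (j - i) + i = j := by omega
  simp only [hs, Set.mem_setOf_eq, hji] at hm
  exact lt_of_not_ge hm


section Det
variable (e : ℕ → ℝ)

local notation "S" => fun n : ℕ => ∑ k ∈ Finset.range n, e k
local notation "Yf" => fun n : ℕ => Real.exp (-(∑ k ∈ Finset.range (n-1), e k))
local notation "Df" => fun n : ℕ => ∑ k ∈ Finset.Icc 1 n, Real.exp (-(∑ t ∈ Finset.range (k-1), e t))

variable (he : ∀ k, 0 ≤ e k)

include he in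
lemma zac_S_mono : Monotone (S) := fun a b h =>
  Finset.sum_le_sum_of_subset_of_nonneg (Finset.range_subset_range.mpr h) (fun k _ _ => he k)

include he in
lemma zac_Y_anti {a b : ℕ} (h : a ≤ b) : Yf b ≤ Yf a := by
  apply Real.exp_le_exp.mpr
  simp only [neg_le_neg_iff]
  exact zac_S_mono e he (Nat.sub_le_sub_right h 1)

include he in
lemma zac_block (j : ℕ) : ∀ m : ℕ, m ≤ j →
    (∀ i : ℕ, i < m → (i:ℝ) * Real.log 2 - 1 <
      ∑ l ∈ Finset.Ico (2^(j-i)-1 : ℕ) (2^j-1 : ℕ), e l) →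
    (m:ℝ) * ((2^(j-1) : ℕ) : ℝ) * Real.exp (-1) * Yf (2^j) ≤
      ∑ k ∈ Finset.Ioc (2^(j-m) : ℕ) (2^j : ℕ), Yf k := by
  intro m
  induction m with
  | zero => simp
  | succ m ih =>
    intro hmj hgood
    have hmj' : m ≤ j := by omega
    have h1 : (2^(j-(m+1)) : ℕ) ≤ 2^(j-m) := Nat.pow_le_pow_right (by norm_num) (by omega)
    have h2 : (2^(j-m) : ℕ) ≤ 2^j := Nat.pow_le_pow_right (by norm_num) (by omega)
    rw [← Finset.sum_Ioc_consecutive _ h1 h2]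
    have htail := ih hmj' (fun i hi => hgood i (by omega))
    -- per-element bound on the new block  (i := m)
    have hkey : ∀ k ∈ Finset.Ioc (2^(j-(m+1)) : ℕ) (2^(j-m) : ℕ),
        ((2^m : ℕ) : ℝ) * Real.exp (-1) * Yf (2^j) ≤ Yf k := by
      intro k hk
      rw [Finset.mem_Ioc] at hk
      have hAB : (2^(j-m)-1 : ℕ) ≤ 2^j - 1 := Nat.sub_le_sub_right h2 1
      have hsplit : S (2^(j-m)-1) + ∑ l ∈ Finset.Ico (2^(j-m)-1 : ℕ) (2^j-1 : ℕ), e l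
          = S (2^j-1) := Finset.sum_range_add_sum_Ico _ hAB
      have hmono : S (k-1) ≤ S (2^(j-m)-1) :=
        zac_S_mono e he (Nat.sub_le_sub_right hk.2 1)
      have hgm := hgood m (by omega)
      have hS : S (k-1) < S (2^j-1) - ((m:ℝ) * Real.log 2 - 1) := by
        rw [show (j:ℕ) - m = j - m from rfl] at hsplit
        linarith
      have : Real.exp ((m:ℝ) * Real.log 2 - 1 - S (2^j-1)) ≤ Real.exp (-(S (k-1))) := by
        apply Real.exp_le_exp.mpr
        linarith
      calc ((2^m : ℕ) : ℝ) * Real.exp (-1) * Yf (2^j)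
          = Real.exp ((m:ℝ) * Real.log 2 - 1 - S (2^j-1)) := by
            rw [show (m:ℝ) * Real.log 2 - 1 - S (2^j-1)
              = (m:ℝ) * Real.log 2 + (-1) + (-(S (2^j-1))) by ring,
              Real.exp_add, Real.exp_add, Real.exp_nat_mul, Real.exp_log two_pos]
            beta_reduce
            push_cast
            ring
      _ ≤ Yf k := this
    have hcard : (Finset.Ioc (2^(j-(m+1)) : ℕ) (2^(j-m) : ℕ)).card = 2^(j-(m+1)) := by
      rw [Nat.card_Ioc]
      have : (2:ℕ)^(j-m) = 2 * 2^(j-(m+1)) := by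
        rw [← pow_succ']
        congr 1
        omega
      omega
    have hblock : ((2^(j-(m+1)) : ℕ) : ℝ) * (((2^m : ℕ) : ℝ) * Real.exp (-1) * Yf (2^j))
        ≤ ∑ k ∈ Finset.Ioc (2^(j-(m+1)) : ℕ) (2^(j-m) : ℕ), Yf k := by
      have := Finset.card_nsmul_le_sum _ _ _ hkey
      rwa [hcard, nsmul_eq_mul] at this
    have hpow : ((2^(j-(m+1)) : ℕ) : ℝ) * ((2^m : ℕ) : ℝ) = ((2^(j-1) : ℕ) : ℝ) := by
      push_cast
      rw [← pow_add]
      congr 1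
      omega
    push_cast [Nat.cast_succ]
    push_cast at htail hblock hpow
    rw [show ((2:ℝ)^(j-(m+1)) * ((2:ℝ)^m * Real.exp (-1) *
        Real.exp (-(∑ k ∈ Finset.range (2^j-1), e k))))
      = ((2:ℝ)^(j-(m+1)) * (2:ℝ)^m) * (Real.exp (-1) *
        Real.exp (-(∑ k ∈ Finset.range (2^j-1), e k))) from by ring, hpow] at hblock
    linarith

end Det

section Det2
variable (e : ℕ → ℝ) (he : ∀ k, 0 ≤ e k)

local notation "Yf" => fun n : ℕ => Real.exp (-(∑ k ∈ Finset.range (n-1), e k))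
local notation "Df" => fun n : ℕ => ∑ k ∈ Finset.Icc 1 n, Real.exp (-(∑ t ∈ Finset.range (k-1), e t))

include he in
lemma zac_ratio (j m : ℕ) (hm1 : 1 ≤ m) (hmj : m ≤ j)
    (hgood : ∀ i : ℕ, i < m → (i:ℝ) * Real.log 2 - 1 <
      ∑ l ∈ Finset.Ico (2^(j-i)-1 : ℕ) (2^j-1 : ℕ), e l)
    (n : ℕ) (hn1 : 2^j ≤ n) (hn2 : n < 2^(j+1)) :
    (n:ℝ) * Yf n / Df n ≤ 4 * Real.exp 1 / m := by
  have hb := zac_block e he j m hmj hgood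
  have hc0 : (0:ℝ) < (m:ℝ) * ((2^(j-1) : ℕ) : ℝ) * Real.exp (-1) * Yf (2^j) := by
    have hm0 : (0:ℝ) < (m:ℝ) := by exact_mod_cast hm1
    have h20 : (0:ℝ) < ((2^(j-1) : ℕ) : ℝ) := by positivity
    positivity
  have hsub : ∑ k ∈ Finset.Ioc (2^(j-m) : ℕ) (2^j : ℕ), Yf k ≤ Df (2^j) := by
    beta_reduce
    rw [show Finset.Icc 1 (2^j) = Finset.Ioc 0 (2^j) from Finset.Icc_add_one_left_eq_Ioc 0 (2^j)]
    exact Finset.sum_le_sum_of_subset_of_nonneg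
      (Finset.Ioc_subset_Ioc (Nat.zero_le _) le_rfl)
      (fun k _ _ => (Real.exp_pos _).le)
  have hDn : Df (2^j) ≤ Df n :=
    Finset.sum_le_sum_of_subset_of_nonneg
      (Finset.Icc_subset_Icc le_rfl hn1) (fun k _ _ => (Real.exp_pos _).le)
  have hYn : Yf n ≤ Yf (2^j) := zac_Y_anti e he hn1
  have hnum : (n:ℝ) * Yf n ≤ ((2^(j+1) : ℕ) : ℝ) * Yf (2^j) := by
    apply mul_le_mul (by exact_mod_cast hn2.le) hYn (Real.exp_pos _).le (by positivity)
  calc (n:ℝ) * Yf n / Df n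
      ≤ ((2^(j+1) : ℕ) : ℝ) * Yf (2^j) /
        ((m:ℝ) * ((2^(j-1) : ℕ) : ℝ) * Real.exp (-1) * Yf (2^j)) :=
      div_le_div₀ (by positivity) hnum hc0 (hb.trans (hsub.trans hDn))
  _ = 4 * Real.exp 1 / m := by
      have h4 : ((2^(j+1) : ℕ) : ℝ) = 4 * ((2^(j-1) : ℕ) : ℝ) := by
        push_cast
        rw [show j+1 = (j-1)+2 by omega, pow_add]
        ring
      rw [h4, Real.exp_neg]
      have hm0 : (m:ℝ) ≠ 0 := Nat.cast_ne_zero.mpr (by omega)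
      have hp0 : ((2^(j-1) : ℕ) : ℝ) ≠ 0 := by positivity
      have hY0 : Real.exp (-(∑ k ∈ Finset.range (2^j-1), e k)) ≠ 0 := Real.exp_ne_zero _
      have hE0 : Real.exp 1 ≠ 0 := Real.exp_ne_zero 1
      beta_reduce
      field_simp

include he in
lemma zac_det
    (hG : ∀ i : ℕ, ∀ᶠ j in atTop, (i:ℝ) * Real.log 2 - 1 <
      ∑ l ∈ Finset.Ico (2^(j-i)-1 : ℕ) (2^j-1 : ℕ), e l) :
    Tendsto (fun n : ℕ => (n:ℝ) * Yf n / Df n) atTop (nhds 0) := by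
  rw [Metric.tendsto_atTop]
  intro ε hε
  set m := ⌈4 * Real.exp 1 / ε⌉₊ + 1 with hm_def
  have hm1 : 1 ≤ m := by omega
  have hmε : 4 * Real.exp 1 / m < ε := by
    have h1 : 4 * Real.exp 1 / ε < m := by
      have := Nat.le_ceil (4 * Real.exp 1 / ε)
      push_cast [hm_def]
      linarith
    have hm0 : (0:ℝ) < (m:ℝ) := by exact_mod_cast hm1
    rw [div_lt_iff₀ hm0]
    rw [div_lt_iff₀ hε] at h1
    linarith
  have hall : ∀ᶠ j in atTop, ∀ i ∈ Finset.range m, (i:ℝ) * Real.log 2 - 1 <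
      ∑ l ∈ Finset.Ico (2^(j-i)-1 : ℕ) (2^j-1 : ℕ), e l :=
    (Filter.eventually_all_finset (Finset.range m)).mpr (fun i _ => hG i)
  obtain ⟨J, hJ⟩ := eventually_atTop.mp hall
  refine ⟨2^(max J m), fun n hn => ?_⟩
  have hn0 : n ≠ 0 := by
    have h1 : (1:ℕ) ≤ 2^(max J m) := Nat.one_le_two_pow
    omega
  set j := Nat.log 2 n with hj_def
  have hj1 : 2^j ≤ n := Nat.pow_log_le_self 2 hn0
  have hj2 : n < 2^(j+1) := Nat.lt_pow_succ_log_self (by norm_num) n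
  have hjJ : max J m ≤ j := (Nat.le_log_iff_pow_le (by norm_num) hn0).mpr hn
  have hR := zac_ratio e he j m hm1 (le_trans (le_max_right J m) hjJ)
    (fun i hi => hJ j (le_trans (le_max_left J m) hjJ) i (Finset.mem_range.mpr hi))
    n hj1 hj2
  rw [Real.dist_eq, sub_zero, abs_of_nonneg ?_]
  · exact lt_of_le_of_lt hR hmε
  · apply div_nonneg (by positivity)
    exact Finset.sum_nonneg fun k _ => (Real.exp_pos _).le

end Det2


lemma zac_nonneg_ae {Ω : Type*} [MeasureSpace Ω] [IsProbabilityMeasure (ℙ : Measure Ω)]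
    (E : ℕ → Ω → ℝ) (hmeas : ∀ k, Measurable (E k))
    (hdist : ∀ k : ℕ, Measure.map (E k) ℙ = expMeasure (k + 1)) :
    ∀ᵐ ω ∂(ℙ : Measure Ω), ∀ k, 0 ≤ E k ω := by
  rw [ae_all_iff]
  intro k
  rw [ae_iff]
  have : {ω | ¬ 0 ≤ E k ω} = E k ⁻¹' (Iio 0) := by
    ext ω; simp [not_le]
  rw [this, ← Measure.map_apply (hmeas k) measurableSet_Iio, hdist k]
  exact zac_expMeasure_Iio _

end ZacAux

/-- Almost surely, `n·Y_n / (Y_1 + ⋯ + Y_n) → 0`, where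
`Y_n = exp(−(E_1 + ⋯ + E_{n−1}))` and the `E_k` are independent, exponentially
distributed with rate `k`. Here `E k` stands for the variable of index `k + 1`. -/
theorem zipfian_atlas_completeness_as
    {Ω : Type*} [MeasureSpace Ω] [IsProbabilityMeasure (ℙ : Measure Ω)]
    (E : ℕ → Ω → ℝ)
    (hmeas : ∀ k, Measurable (E k))
    (hindep : iIndepFun E ℙ)
    (hdist : ∀ k : ℕ, Measure.map (E k) ℙ = expMeasure (k + 1))
    (Y : ℕ → Ω → ℝ)
    (hY : ∀ n : ℕ, ∀ ω, Y n ω = Real.exp (-(∑ k ∈ Finset.range (n - 1), E k ω))) :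
    ∀ᵐ ω ∂(ℙ : Measure Ω),
      Tendsto (fun n : ℕ => (n : ℝ) * Y n ω / (∑ k ∈ Finset.Icc 1 n, Y k ω))
        atTop (nhds 0) := by
  filter_upwards [zac_bc E hmeas hindep hdist, zac_nonneg_ae E hmeas hdist] with ω hω hnn
  have hdet := zac_det (fun k => E k ω) (fun k => hnn k) hω
  simpa only [hY] using hdet
end

section
/- The expectations converge: lim_{n→∞} E[ n·Y_n/(Y_1 + Y_2 + ⋯ + Y_n) ] = 0. -/
open MeasureTheory ProbabilityTheory Filter Real Set

lemma lintegral_exp_mul_expMeasure {r t : ℝ} (hr : 0 < r) (ht : t < r) :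
    ∫⁻ x, ENNReal.ofReal (Real.exp (t * x)) ∂(expMeasure r)
      = ENNReal.ofReal (r / (r - t)) := by
  have hmeas : Measurable fun x : ℝ => Real.exp (t * x) :=
    (measurable_id.const_mul t).exp
  have hrt : 0 < r - t := by linarith
  have hInt : IntegrableOn (fun x : ℝ => r * Real.exp (-((r - t) * x))) (Ioi 0) := by
    have h0 := (exp_neg_integrableOn_Ioi 0 hrt).const_mul r
    have he : (fun x : ℝ => r * Real.exp (-((r - t) * x)))
        = fun x : ℝ => r * Real.exp (-(r - t) * x) := by
      funext x; rw [neg_mul]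
    rw [he]; exact h0
  have hval : ∫ x in Ioi (0:ℝ), r * Real.exp (-((r - t) * x)) = r / (r - t) := by
    have h := integral_rpow_mul_exp_neg_mul_Ioi (a := 1) (r := r - t) one_pos hrt
    simp only [sub_self, Real.rpow_zero, one_mul, Real.rpow_one, Real.Gamma_one, mul_one] at h
    rw [MeasureTheory.integral_const_mul, h]
    field_simp
  have hpdfmeas : Measurable (exponentialPDF r) :=
    (measurable_exponentialPDFReal r).ennreal_ofReal
  rw [show expMeasure r = MeasureTheory.volume.withDensity (exponentialPDF r) from rfl,
    lintegral_withDensity_eq_lintegral_mul _ hpdfmeas hmeas.ennreal_ofReal]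
  rw [← lintegral_add_compl (μ := MeasureTheory.volume)
      (f := (exponentialPDF r * fun x => ENNReal.ofReal (Real.exp (t * x)))) measurableSet_Ici]
  have h1 : ∫⁻ x in Ici (0:ℝ),
      (exponentialPDF r * fun x => ENNReal.ofReal (Real.exp (t * x))) x
      = ENNReal.ofReal (r / (r - t)) := by
    rw [setLIntegral_congr (Ioi_ae_eq_Ici (a := (0:ℝ))).symm]
    rw [setLIntegral_congr_fun (g := fun x => ENNReal.ofReal (r * Real.exp (-((r - t) * x))))
      measurableSet_Ioi
      (fun x (hx : x ∈ Ioi 0) => by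
        show exponentialPDF r x * ENNReal.ofReal (Real.exp (t * x)) = _
        rw [exponentialPDF_of_nonneg (le_of_lt hx),
          ← ENNReal.ofReal_mul (by positivity)]
        congr 1
        rw [mul_assoc, ← Real.exp_add]
        congr 1
        ring)]
    rw [← ofReal_integral_eq_lintegral_ofReal hInt
      (ae_of_all _ (fun x => by positivity)), hval]
  have h2 : ∫⁻ x in (Ici (0:ℝ))ᶜ,
      (exponentialPDF r * fun x => ENNReal.ofReal (Real.exp (t * x))) x = 0 := by
    rw [compl_Ici]
    rw [setLIntegral_congr_fun measurableSet_Iio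
      (fun x (hx : x ∈ Iio 0) => by
        show exponentialPDF r x * ENNReal.ofReal (Real.exp (t * x)) = 0
        rw [exponentialPDF_of_neg hx, zero_mul])]
    simp
  rw [h1, h2, add_zero]

lemma exp_mul_integrable_expMeasure {r t : ℝ} (hr : 0 < r) (ht : t < r) :
    Integrable (fun x => Real.exp (t * x)) (expMeasure r) := by
  have hmeas : Measurable fun x : ℝ => Real.exp (t * x) :=
    (measurable_id.const_mul t).exp
  refine ⟨hmeas.aestronglyMeasurable, ?_⟩
  rw [hasFiniteIntegral_iff_ofReal (ae_of_all _ fun x => (Real.exp_pos _).le)]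
  rw [lintegral_exp_mul_expMeasure hr ht]
  exact ENNReal.ofReal_lt_top

lemma integral_exp_mul_expMeasure {r t : ℝ} (hr : 0 < r) (ht : t < r) :
    ∫ x, Real.exp (t * x) ∂(expMeasure r) = r / (r - t) := by
  have hmeas : Measurable fun x : ℝ => Real.exp (t * x) :=
    (measurable_id.const_mul t).exp
  rw [integral_eq_lintegral_of_nonneg_ae (ae_of_all _ fun x => (Real.exp_pos _).le)
    hmeas.aestronglyMeasurable, lintegral_exp_mul_expMeasure hr ht,
    ENNReal.toReal_ofReal (div_nonneg hr.le (by linarith))]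

section Main
variable {Ω : Type*} [MeasureSpace Ω] [IsProbabilityMeasure (ℙ : Measure Ω)]
  (E : ℕ → Ω → ℝ)
  (hmeas : ∀ k, Measurable (E k))
  (hindep : iIndepFun E ℙ)
  (hdist : ∀ k : ℕ, Measure.map (E k) ℙ = expMeasure (k + 1))

include hmeas hdist in
lemma exp_single_int {c : ℝ} {j : ℕ} (hc : c < (j:ℝ) + 1) :
    Integrable (fun ω => Real.exp (c * E j ω)) ℙ ∧
      ∫ ω, Real.exp (c * E j ω) ∂(ℙ : Measure Ω) = ((j:ℝ) + 1) / (((j:ℝ) + 1) - c) := by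
  have hr : (0:ℝ) < (j:ℝ) + 1 := by positivity
  have hg : Measurable fun x : ℝ => Real.exp (c * x) := (measurable_id.const_mul c).exp
  have hmap := hdist j
  push_cast at hmap
  constructor
  · have := (exp_mul_integrable_expMeasure hr hc)
    rw [← hmap] at this
    exact (integrable_map_measure hg.aestronglyMeasurable (hmeas j).aemeasurable).mp this
  · have h := integral_map (μ := (ℙ : Measure Ω)) (φ := E j) (f := fun x => Real.exp (c * x))
      (hmeas j).aemeasurable hg.aestronglyMeasurable
    rw [hmap, integral_exp_mul_expMeasure hr hc] at h
    exact h.symm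

include hmeas hindep hdist in
lemma exp_sum_int (c : ℕ → ℝ) (s : Finset ℕ) (hc : ∀ j ∈ s, c j < (j:ℝ) + 1) :
    Integrable (fun ω => Real.exp (∑ j ∈ s, c j * E j ω)) ℙ ∧
      ∫ ω, Real.exp (∑ j ∈ s, c j * E j ω) ∂(ℙ : Measure Ω)
        = ∏ j ∈ s, (((j:ℝ) + 1) / (((j:ℝ) + 1) - c j)) := by
  classical
  set F : ℕ → Ω → ℝ := fun j ω => c j * E j ω with hF
  have hFmeas : ∀ j, Measurable (F j) := fun j => (hmeas j).const_mul (c j)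
  have hFindep : iIndepFun F ℙ := by
    have := hindep.comp (fun j (x : ℝ) => c j * x) (fun j => measurable_id.const_mul (c j))
    exact this
  have hFint : ∀ j ∈ s, Integrable (fun ω => Real.exp (1 * F j ω)) ℙ := by
    intro j hj
    simpa [one_mul, hF] using (exp_single_int E hmeas hdist (hc j hj)).1
  have hsum : (fun ω => Real.exp (∑ j ∈ s, c j * E j ω))
      = fun ω => Real.exp (1 * (∑ j ∈ s, F j) ω) := by
    funext ω; simp [hF]
  constructor
  · rw [hsum]
    exact hFindep.integrable_exp_mul_sum hFmeas hFint
  · have hmgf := hFindep.mgf_sum (t := 1) hFmeas s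
    rw [mgf] at hmgf
    rw [hsum, hmgf]
    refine Finset.prod_congr rfl (fun j hj => ?_)
    have h2 := (exp_single_int E hmeas hdist (hc j hj)).2
    rw [mgf]
    simpa [hF] using h2

end Main

lemma prod_P1 (a : ℕ) (ha : 1 ≤ a) : ∀ b : ℕ, a ≤ b →
    ∏ j ∈ Finset.Ico a b, (((j:ℝ) + 1) / (j:ℝ)) = (b:ℝ) / (a:ℝ) := by
  intro b
  induction b with
  | zero => intro hb; interval_cases a <;> simp at ha ⊢
  | succ b ih =>
    intro hb
    rcases Nat.lt_or_ge a (b+1) with h | h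
    · have hab : a ≤ b := Nat.lt_succ_iff.mp h
      rw [Finset.prod_Ico_succ_top hab, ih hab]
      have hb0 : (0:ℝ) < (b:ℝ) := by
        have : 1 ≤ b := le_trans ha hab
        exact_mod_cast Nat.lt_of_lt_of_le Nat.zero_lt_one this
      have ha0 : (0:ℝ) < (a:ℝ) := by exact_mod_cast ha
      push_cast
      field_simp
    · have : a = b + 1 := le_antisymm hb h
      subst this
      rw [Finset.Ico_self, Finset.prod_empty]
      exact (div_self (by positivity)).symm

lemma prod_P2 (a : ℕ) (ha : 2 ≤ a) : ∀ b : ℕ, a ≤ b →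
    ∏ j ∈ Finset.Ico a b, (((j:ℝ) + 1) / ((j:ℝ) - 1))
      = ((b:ℝ) * ((b:ℝ) - 1)) / ((a:ℝ) * ((a:ℝ) - 1)) := by
  intro b
  induction b with
  | zero => intro hb; omega
  | succ b ih =>
    intro hb
    rcases Nat.lt_or_ge a (b+1) with h | h
    · have hab : a ≤ b := Nat.lt_succ_iff.mp h
      rw [Finset.prod_Ico_succ_top hab, ih hab]
      have hb2 : (2:ℝ) ≤ (b:ℝ) := by exact_mod_cast le_trans ha hab
      have ha2 : (2:ℝ) ≤ (a:ℝ) := by exact_mod_cast ha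
      have h1 : (b:ℝ) - 1 ≠ 0 := by nlinarith
      have h2 : (b:ℝ) ≠ 0 := by nlinarith
      have h3 : (a:ℝ) * ((a:ℝ) - 1) ≠ 0 := by nlinarith
      push_cast
      field_simp
      ring
    · have : a = b + 1 := le_antisymm hb h
      subst this
      rw [Finset.Ico_self, Finset.prod_empty]
      have : ((b:ℝ) + 1) * ((b:ℝ) + 1 - 1) ≠ 0 := by
        have : (2:ℝ) ≤ (b:ℝ) + 1 := by exact_mod_cast ha
        nlinarith
      push_cast
      rw [div_self this]

lemma sum_S2 : ∀ n : ℕ, 2 ≤ n →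
    ∑ l ∈ Finset.Icc 3 n, 1 / ((((l:ℝ)) - 2) * (((l:ℝ)) - 1)) = 1 - 1 / ((n:ℝ) - 1) := by
  intro n
  induction n with
  | zero => omega
  | succ n ih =>
    intro hn
    rcases Nat.lt_or_ge n 2 with h | h
    · interval_cases n
      · omega
      · norm_num
    · rw [show (3:ℕ) = 2 + 1 from rfl, Finset.sum_Icc_succ_top (by omega), ih h]
      have hn2 : (2:ℝ) ≤ (n:ℝ) := by exact_mod_cast h
      have h1 : (n:ℝ) - 1 ≠ 0 := by nlinarith
      have h2 : (n:ℝ) ≠ 0 := by nlinarith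
      have key : 1/(((n:ℝ)-1)*(n:ℝ)) = 1/((n:ℝ)-1) - 1/(n:ℝ) := by
        rw [div_sub_div _ _ h1 h2]
        norm_num
      push_cast
      have e1 : (n:ℝ) + 1 - 2 = (n:ℝ) - 1 := by ring
      have e2 : (n:ℝ) + 1 - 1 = (n:ℝ) := by ring
      rw [e1, e2]
      linarith [key]

lemma hsum_eq : ∀ n : ℕ, 2 ≤ n →
    ∑ k ∈ Finset.Icc 3 n, 1 / ((k:ℝ) - 1)
      = (∑ i ∈ Finset.range (n-1), 1 / ((i:ℝ) + 1)) - 1 := by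
  intro n
  induction n with
  | zero => omega
  | succ n ih =>
    intro hn
    rcases Nat.lt_or_ge n 2 with h | h
    · interval_cases n
      · omega
      · norm_num
    · rw [show (3:ℕ) = 2 + 1 from rfl, Finset.sum_Icc_succ_top (by omega), ih h]
      have h3 : n + 1 - 1 = (n - 1) + 1 := by omega
      rw [h3, Finset.sum_range_succ]
      have h4 : ((n - 1 : ℕ) : ℝ) = (n:ℝ) - 1 := by
        have : 1 ≤ n := by omega
        push_cast [this]
        ring
      rw [h4]
      push_cast
      ring

lemma hsum_tendsto : Tendsto (fun n : ℕ => ∑ k ∈ Finset.Icc 3 n, 1 / ((k:ℝ) - 1))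
    atTop atTop := by
  have h1 : Tendsto (fun m : ℕ => (∑ i ∈ Finset.range m, 1 / ((i:ℝ) + 1)) - 1) atTop atTop := by
    apply tendsto_atTop_add_const_right
    exact_mod_cast Real.tendsto_sum_range_one_div_nat_succ_atTop
  have h2 : Tendsto (fun n : ℕ => n - 1) atTop atTop := tendsto_sub_atTop_nat 1
  apply Tendsto.congr' _ (h1.comp h2)
  filter_upwards [eventually_ge_atTop 2] with n hn
  exact (hsum_eq n hn).symm

section Main2
variable {Ω : Type*} [MeasureSpace Ω] [IsProbabilityMeasure (ℙ : Measure Ω)]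
  {E : ℕ → Ω → ℝ}
  (hmeas : ∀ k, Measurable (E k))
  (hindep : iIndepFun E ℙ)
  (hdist : ∀ k : ℕ, Measure.map (E k) ℙ = expMeasure (k + 1))

include hmeas hindep hdist in
lemma termA {n k : ℕ} (h3 : 3 ≤ k) (hkn : k ≤ n) :
    Integrable (fun ω => Real.exp (∑ j ∈ Finset.Ico (k-1) (n-1), E j ω)) ℙ ∧
    ∫ ω, Real.exp (∑ j ∈ Finset.Ico (k-1) (n-1), E j ω) ∂(ℙ : Measure Ω)
      = ((n:ℝ) - 1) / ((k:ℝ) - 1) := by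
  obtain ⟨hint, hval⟩ := exp_sum_int E hmeas hindep hdist (fun _ => 1)
    (Finset.Ico (k-1) (n-1))
    (fun j hj => by
      show (1:ℝ) < (j:ℝ) + 1
      have hj2 : 2 ≤ j := by have := (Finset.mem_Ico.mp hj).1; omega
      have : (2:ℝ) ≤ (j:ℝ) := by exact_mod_cast hj2
      linarith)
  have hfun : (fun ω => Real.exp (∑ j ∈ Finset.Ico (k-1) (n-1), (fun _ => (1:ℝ)) j * E j ω))
      = (fun ω => Real.exp (∑ j ∈ Finset.Ico (k-1) (n-1), E j ω)) := by
    funext ω; congr 1; exact Finset.sum_congr rfl (fun j _ => one_mul _)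
  rw [hfun] at hint hval
  refine ⟨hint, ?_⟩
  rw [hval]
  have hprod : ∏ j ∈ Finset.Ico (k-1) (n-1), (((j:ℝ) + 1) / (((j:ℝ) + 1) - (fun _ => (1:ℝ)) j))
      = ∏ j ∈ Finset.Ico (k-1) (n-1), (((j:ℝ) + 1) / (j:ℝ)) := by
    refine Finset.prod_congr rfl (fun j _ => by norm_num)
  rw [hprod, prod_P1 (k-1) (by omega) (n-1) (by omega)]
  have c1 : ((n-1 : ℕ) : ℝ) = (n:ℝ) - 1 := by
    have : 1 ≤ n := by omega
    push_cast [this]; ring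
  have c2 : ((k-1 : ℕ) : ℝ) = (k:ℝ) - 1 := by
    have : 1 ≤ k := by omega
    push_cast [this]; ring
  rw [c1, c2]

include hmeas hindep hdist in
lemma termB {n k l : ℕ} (h3 : 3 ≤ k) (hkl : k ≤ l) (hln : l ≤ n) :
    Integrable (fun ω => Real.exp (∑ j ∈ Finset.Ico (k-1) (n-1), E j ω)
      * Real.exp (∑ j ∈ Finset.Ico (l-1) (n-1), E j ω)) ℙ ∧
    ∫ ω, Real.exp (∑ j ∈ Finset.Ico (k-1) (n-1), E j ω)
      * Real.exp (∑ j ∈ Finset.Ico (l-1) (n-1), E j ω) ∂(ℙ : Measure Ω)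
      = (((n:ℝ) - 1) * ((n:ℝ) - 2)) / (((k:ℝ) - 1) * ((l:ℝ) - 2)) := by
  classical
  set c : ℕ → ℝ := fun j => if l-1 ≤ j then (2:ℝ) else 1 with hc
  have hk1l1 : k - 1 ≤ l - 1 := by omega
  have hl1n1 : l - 1 ≤ n - 1 := by omega
  have hsplit : (fun ω => Real.exp (∑ j ∈ Finset.Ico (k-1) (n-1), E j ω)
      * Real.exp (∑ j ∈ Finset.Ico (l-1) (n-1), E j ω))
      = fun ω => Real.exp (∑ j ∈ Finset.Ico (k-1) (n-1), c j * E j ω) := by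
    funext ω
    rw [← Real.exp_add]
    congr 1
    rw [← Finset.sum_Ico_consecutive (fun j => E j ω) hk1l1 hl1n1,
      ← Finset.sum_Ico_consecutive (fun j => c j * E j ω) hk1l1 hl1n1]
    have e1 : ∑ j ∈ Finset.Ico (k-1) (l-1), c j * E j ω
        = ∑ j ∈ Finset.Ico (k-1) (l-1), E j ω := by
      refine Finset.sum_congr rfl (fun j hj => ?_)
      have : ¬ (l - 1 ≤ j) := by
        have := (Finset.mem_Ico.mp hj).2; omega
      rw [hc]; simp only [this, if_false, one_mul]
    have e2 : ∑ j ∈ Finset.Ico (l-1) (n-1), c j * E j ω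
        = 2 * ∑ j ∈ Finset.Ico (l-1) (n-1), E j ω := by
      rw [Finset.mul_sum]
      refine Finset.sum_congr rfl (fun j hj => ?_)
      have : l - 1 ≤ j := (Finset.mem_Ico.mp hj).1
      rw [hc]; simp only [this, if_true]
    rw [e1, e2]
    ring
  obtain ⟨hint, hval⟩ := exp_sum_int E hmeas hindep hdist c (Finset.Ico (k-1) (n-1))
    (fun j hj => by
      have hj1 : k - 1 ≤ j := (Finset.mem_Ico.mp hj).1
      have hj2 : 2 ≤ j := by omega
      have : (2:ℝ) ≤ (j:ℝ) := by exact_mod_cast hj2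
      rw [hc]
      by_cases hcase : l - 1 ≤ j <;> simp only [hcase, if_true, if_false] <;> linarith)
  rw [← hsplit] at hint hval
  refine ⟨hint, ?_⟩
  rw [hval]
  rw [← Finset.prod_Ico_consecutive (fun j => ((j:ℝ) + 1) / (((j:ℝ) + 1) - c j)) hk1l1 hl1n1]
  have e1 : ∏ j ∈ Finset.Ico (k-1) (l-1), (((j:ℝ) + 1) / (((j:ℝ) + 1) - c j))
      = ∏ j ∈ Finset.Ico (k-1) (l-1), (((j:ℝ) + 1) / (j:ℝ)) := by
    refine Finset.prod_congr rfl (fun j hj => ?_)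
    have : ¬ (l - 1 ≤ j) := by have := (Finset.mem_Ico.mp hj).2; omega
    rw [hc]; simp only [this, if_false]; norm_num
  have e2 : ∏ j ∈ Finset.Ico (l-1) (n-1), (((j:ℝ) + 1) / (((j:ℝ) + 1) - c j))
      = ∏ j ∈ Finset.Ico (l-1) (n-1), (((j:ℝ) + 1) / ((j:ℝ) - 1)) := by
    refine Finset.prod_congr rfl (fun j hj => ?_)
    have : l - 1 ≤ j := (Finset.mem_Ico.mp hj).1
    rw [hc]; simp only [this, if_true]
    rw [show (j:ℝ) + 1 - 2 = (j:ℝ) - 1 by ring]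
  rw [e1, e2, prod_P1 (k-1) (by omega) (l-1) (by omega),
    prod_P2 (l-1) (by omega) (n-1) (by omega)]
  have ck : ((k-1 : ℕ) : ℝ) = (k:ℝ) - 1 := by
    have : 1 ≤ k := by omega
    push_cast [this]; ring
  have cl : ((l-1 : ℕ) : ℝ) = (l:ℝ) - 1 := by
    have : 1 ≤ l := by omega
    push_cast [this]; ring
  have cn : ((n-1 : ℕ) : ℝ) = (n:ℝ) - 1 := by
    have : 1 ≤ n := by omega
    push_cast [this]; ring
  rw [ck, cl, cn]
  have hk2 : (3:ℝ) ≤ (k:ℝ) := by exact_mod_cast h3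
  have hl2 : (3:ℝ) ≤ (l:ℝ) := by exact_mod_cast le_trans h3 hkl
  have hn2 : (3:ℝ) ≤ (n:ℝ) := by exact_mod_cast le_trans (le_trans h3 hkl) hln
  have d1 : (l:ℝ) - 1 ≠ 0 := by nlinarith
  have d2 : (k:ℝ) - 1 ≠ 0 := by nlinarith
  have d3 : (l:ℝ) - 1 - 1 = (l:ℝ) - 2 := by ring
  have d4 : (n:ℝ) - 1 - 1 = (n:ℝ) - 2 := by ring
  rw [d3, d4]
  have d5 : (l:ℝ) - 2 ≠ 0 := by nlinarith
  field_simp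

include hmeas hindep hdist in
lemma pair_bound {n k l : ℕ} (h3k : 3 ≤ k) (h3l : 3 ≤ l) (hkn : k ≤ n) (hln : l ≤ n) :
    Integrable (fun ω => Real.exp (∑ j ∈ Finset.Ico (k-1) (n-1), E j ω)
      * Real.exp (∑ j ∈ Finset.Ico (l-1) (n-1), E j ω)) ℙ ∧
    ∫ ω, Real.exp (∑ j ∈ Finset.Ico (k-1) (n-1), E j ω)
      * Real.exp (∑ j ∈ Finset.Ico (l-1) (n-1), E j ω) ∂(ℙ : Measure Ω)
      ≤ ((n:ℝ)-1)^2 * ((1/((k:ℝ)-1)) * (1/((l:ℝ)-1))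
          + (1/((k:ℝ)-1)) * (1/(((l:ℝ)-2)*((l:ℝ)-1)))
          + (1/((l:ℝ)-1)) * (1/(((k:ℝ)-2)*((k:ℝ)-1)))) := by
  have hk3 : (3:ℝ) ≤ (k:ℝ) := by exact_mod_cast h3k
  have hl3 : (3:ℝ) ≤ (l:ℝ) := by exact_mod_cast h3l
  have hn3 : (3:ℝ) ≤ (n:ℝ) := by exact_mod_cast le_trans h3k hkn
  have pk1 : (0:ℝ) < (k:ℝ) - 1 := by linarith
  have pk2 : (0:ℝ) < (k:ℝ) - 2 := by linarith
  have pl1 : (0:ℝ) < (l:ℝ) - 1 := by linarith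
  have pl2 : (0:ℝ) < (l:ℝ) - 2 := by linarith
  have pn1 : (0:ℝ) < (n:ℝ) - 1 := by linarith
  have pn2 : (0:ℝ) ≤ (n:ℝ) - 2 := by linarith
  rcases le_total k l with hkl | hlk
  · obtain ⟨hint, hval⟩ := termB hmeas hindep hdist h3k hkl hln
    refine ⟨hint, ?_⟩
    rw [hval]
    have step1 : (((n:ℝ) - 1) * ((n:ℝ) - 2)) / (((k:ℝ) - 1) * ((l:ℝ) - 2))
        ≤ ((n:ℝ)-1)^2 / (((k:ℝ) - 1) * ((l:ℝ) - 2)) := by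
      apply div_le_div_of_nonneg_right ?_ (by positivity)
      nlinarith
    have step2 : ((n:ℝ)-1)^2 / (((k:ℝ) - 1) * ((l:ℝ) - 2))
        = ((n:ℝ)-1)^2 * ((1/((k:ℝ)-1)) * (1/((l:ℝ)-1))
            + (1/((k:ℝ)-1)) * (1/(((l:ℝ)-2)*((l:ℝ)-1)))) := by
      field_simp
      ring
    have step3 : (0:ℝ) ≤ ((n:ℝ)-1)^2 * ((1/((l:ℝ)-1)) * (1/(((k:ℝ)-2)*((k:ℝ)-1)))) := by
      positivity
    calc (((n:ℝ) - 1) * ((n:ℝ) - 2)) / (((k:ℝ) - 1) * ((l:ℝ) - 2))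
        ≤ ((n:ℝ)-1)^2 / (((k:ℝ) - 1) * ((l:ℝ) - 2)) := step1
      _ ≤ _ := by rw [step2]; nlinarith [step3]
  · obtain ⟨hint0, hval0⟩ := termB hmeas hindep hdist h3l hlk hkn
    have hcomm : (fun ω => Real.exp (∑ j ∈ Finset.Ico (k-1) (n-1), E j ω)
        * Real.exp (∑ j ∈ Finset.Ico (l-1) (n-1), E j ω))
        = (fun ω => Real.exp (∑ j ∈ Finset.Ico (l-1) (n-1), E j ω)
            * Real.exp (∑ j ∈ Finset.Ico (k-1) (n-1), E j ω)) := by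
      funext ω; ring
    rw [hcomm]
    refine ⟨hint0, ?_⟩
    rw [hval0]
    have step1 : (((n:ℝ) - 1) * ((n:ℝ) - 2)) / (((l:ℝ) - 1) * ((k:ℝ) - 2))
        ≤ ((n:ℝ)-1)^2 / (((l:ℝ) - 1) * ((k:ℝ) - 2)) := by
      apply div_le_div_of_nonneg_right ?_ (by positivity)
      nlinarith
    have step2 : ((n:ℝ)-1)^2 / (((l:ℝ) - 1) * ((k:ℝ) - 2))
        = ((n:ℝ)-1)^2 * ((1/((k:ℝ)-1)) * (1/((l:ℝ)-1))
            + (1/((l:ℝ)-1)) * (1/(((k:ℝ)-2)*((k:ℝ)-1)))) := by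
      field_simp
      ring
    have step3 : (0:ℝ) ≤ ((n:ℝ)-1)^2 * ((1/((k:ℝ)-1)) * (1/(((l:ℝ)-2)*((l:ℝ)-1)))) := by
      positivity
    calc (((n:ℝ) - 1) * ((n:ℝ) - 2)) / (((l:ℝ) - 1) * ((k:ℝ) - 2))
        ≤ ((n:ℝ)-1)^2 / (((l:ℝ) - 1) * ((k:ℝ) - 2)) := step1
      _ ≤ _ := by rw [step2]; nlinarith [step3]

include hmeas hindep hdist in
lemma cheb {n : ℕ} (hn : 3 ≤ n) :
    (ℙ {ω | (∑ k ∈ Finset.Icc 3 n, Real.exp (∑ j ∈ Finset.Ico (k-1) (n-1), E j ω))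
        ≤ ((n:ℝ)-1) * (∑ k ∈ Finset.Icc 3 n, 1/((k:ℝ)-1)) / 2}).toReal
      ≤ 8 / (∑ k ∈ Finset.Icc 3 n, 1/((k:ℝ)-1)) := by
  classical
  set I : Finset ℕ := Finset.Icc 3 n with hI
  set a : ℕ → ℝ := fun k => 1/((k:ℝ)-1) with ha
  set b : ℕ → ℝ := fun k => 1/(((k:ℝ)-2)*((k:ℝ)-1)) with hb
  set h : ℝ := ∑ k ∈ I, a k with hh
  set W : Ω → ℝ := fun ω => ∑ k ∈ I, Real.exp (∑ j ∈ Finset.Ico (k-1) (n-1), E j ω) with hW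
  set c : ℝ := ((n:ℝ)-1) * h with hc
  have hmem : ∀ k ∈ I, 3 ≤ k ∧ k ≤ n := fun k hk => by
    have := Finset.mem_Icc.mp hk; omega
  have hn3 : (3:ℝ) ≤ (n:ℝ) := by exact_mod_cast hn
  have hhalf : 1/2 ≤ h := by
    rw [hh]
    have h3I : 3 ∈ I := Finset.mem_Icc.mpr ⟨le_refl 3, hn⟩
    have := Finset.single_le_sum (f := a) (fun i hi => by
      have h3i : 3 ≤ i := (hmem i hi).1
      have : (3:ℝ) ≤ (i:ℝ) := by exact_mod_cast h3i
      show (0:ℝ) ≤ 1/((i:ℝ)-1)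
      apply div_nonneg zero_le_one (by linarith)) h3I
    calc (1:ℝ)/2 = a 3 := by rw [ha]; norm_num
      _ ≤ _ := this
  have hpos : 0 < h := by linarith
  have hcpos : 0 < c := by
    rw [hc]; apply mul_pos (by linarith) hpos
  -- integral of W
  have hWint : Integrable W ℙ := by
    apply integrable_finset_sum
    intro k hk
    exact (termA hmeas hindep hdist (hmem k hk).1 (hmem k hk).2).1
  have hWval : ∫ ω, W ω ∂(ℙ : Measure Ω) = c := by
    rw [hW]
    rw [integral_finset_sum _ (fun k hk =>
      (termA hmeas hindep hdist (hmem k hk).1 (hmem k hk).2).1)]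
    rw [hc, hh, Finset.mul_sum]
    refine Finset.sum_congr rfl (fun k hk => ?_)
    rw [(termA hmeas hindep hdist (hmem k hk).1 (hmem k hk).2).2, ha]
    rw [div_eq_mul_one_div]
  -- WW
  set WW : Ω → ℝ := fun ω => ∑ k ∈ I, ∑ l ∈ I,
      Real.exp (∑ j ∈ Finset.Ico (k-1) (n-1), E j ω)
        * Real.exp (∑ j ∈ Finset.Ico (l-1) (n-1), E j ω) with hWW
  have hWsq : ∀ ω, W ω ^ 2 = WW ω := by
    intro ω
    rw [hW, hWW, sq, Finset.sum_mul_sum]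
  have hWWint : Integrable WW ℙ := by
    apply integrable_finset_sum
    intro k hk
    apply integrable_finset_sum
    intro l hl
    exact (pair_bound hmeas hindep hdist (hmem k hk).1 (hmem l hl).1
      (hmem k hk).2 (hmem l hl).2).1
  set sb : ℝ := ∑ k ∈ I, b k with hsb
  have hsb1 : sb ≤ 1 := by
    rw [hsb, hI]
    have := sum_S2 n (by omega)
    have hn1 : (0:ℝ) < (n:ℝ) - 1 := by linarith
    have : ∑ l ∈ Finset.Icc 3 n, 1 / (((l:ℝ) - 2) * ((l:ℝ) - 1)) = 1 - 1/((n:ℝ)-1) := this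
    rw [show (∑ k ∈ Finset.Icc 3 n, b k) = ∑ l ∈ Finset.Icc 3 n, 1 / (((l:ℝ) - 2) * ((l:ℝ) - 1)) from rfl, this]
    have : 0 ≤ 1/((n:ℝ)-1) := by positivity
    linarith
  have hsbnn : 0 ≤ sb := by
    rw [hsb]
    apply Finset.sum_nonneg
    intro k hk
    have h3k : (3:ℝ) ≤ (k:ℝ) := by exact_mod_cast (hmem k hk).1
    show (0:ℝ) ≤ 1/(((k:ℝ)-2)*((k:ℝ)-1))
    apply div_nonneg zero_le_one
    nlinarith
  have hWWval : ∫ ω, WW ω ∂(ℙ : Measure Ω) ≤ c^2 + 2*((n:ℝ)-1)^2*h := by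
    rw [hWW]
    rw [integral_finset_sum _ (fun k hk => integrable_finset_sum _ (fun l hl =>
      (pair_bound hmeas hindep hdist (hmem k hk).1 (hmem l hl).1
        (hmem k hk).2 (hmem l hl).2).1))]
    have step : ∀ k ∈ I, ∫ ω, (∑ l ∈ I,
        Real.exp (∑ j ∈ Finset.Ico (k-1) (n-1), E j ω)
          * Real.exp (∑ j ∈ Finset.Ico (l-1) (n-1), E j ω)) ∂(ℙ : Measure Ω)
        = ∑ l ∈ I, ∫ ω, Real.exp (∑ j ∈ Finset.Ico (k-1) (n-1), E j ω)
          * Real.exp (∑ j ∈ Finset.Ico (l-1) (n-1), E j ω) ∂(ℙ : Measure Ω) := by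
      intro k hk
      exact integral_finset_sum _ (fun l hl =>
        (pair_bound hmeas hindep hdist (hmem k hk).1 (hmem l hl).1
          (hmem k hk).2 (hmem l hl).2).1)
    rw [Finset.sum_congr rfl step]
    have hle : ∑ k ∈ I, ∑ l ∈ I, (∫ ω, Real.exp (∑ j ∈ Finset.Ico (k-1) (n-1), E j ω)
          * Real.exp (∑ j ∈ Finset.Ico (l-1) (n-1), E j ω) ∂(ℙ : Measure Ω))
        ≤ ∑ k ∈ I, ∑ l ∈ I, ((n:ℝ)-1)^2 * (a k * a l + a k * b l + a l * b k) := by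
      apply Finset.sum_le_sum
      intro k hk
      apply Finset.sum_le_sum
      intro l hl
      exact (pair_bound hmeas hindep hdist (hmem k hk).1 (hmem l hl).1
        (hmem k hk).2 (hmem l hl).2).2
    have heq : ∑ k ∈ I, ∑ l ∈ I, ((n:ℝ)-1)^2 * (a k * a l + a k * b l + a l * b k)
        = ((n:ℝ)-1)^2 * (h*h + h*sb + sb*h) := by
      simp only [← Finset.mul_sum]
      congr 1
      have e1 : ∑ k ∈ I, ∑ l ∈ I, (a k * a l) = h * h := (Finset.sum_mul_sum I I a a).symm
      have e2 : ∑ k ∈ I, ∑ l ∈ I, (a k * b l) = h * sb := (Finset.sum_mul_sum I I a b).symm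
      have e3 : ∑ k ∈ I, ∑ l ∈ I, (a l * b k) = sb * h := by
        have inner : ∀ k ∈ I, ∑ l ∈ I, (a l * b k) = h * b k := by
          intro k _
          rw [← Finset.sum_mul, hh]
        rw [Finset.sum_congr rfl inner, ← Finset.mul_sum, ← hsb]
        ring
      simp only [Finset.sum_add_distrib]
      rw [e1, e2, e3]
    calc ∑ k ∈ I, ∑ l ∈ I, (∫ ω, Real.exp (∑ j ∈ Finset.Ico (k-1) (n-1), E j ω)
          * Real.exp (∑ j ∈ Finset.Ico (l-1) (n-1), E j ω) ∂(ℙ : Measure Ω))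
        ≤ ((n:ℝ)-1)^2 * (h*h + h*sb + sb*h) := by rw [← heq]; exact hle
      _ ≤ c^2 + 2*((n:ℝ)-1)^2*h := by
          rw [hc]
          nlinarith [sq_nonneg ((n:ℝ)-1), hpos, hsb1, hsbnn]
  -- variance & Chebyshev
  set V : Ω → ℝ := fun ω => (W ω - c)^2 with hV
  have hVeq : V = fun ω => WW ω - (2*c*W ω - c^2) := by
    funext ω
    rw [hV, ← hWsq ω]
    ring
  have hsubint : Integrable (fun ω => 2*c*W ω - c^2) ℙ :=
    (hWint.const_mul (2*c)).sub (integrable_const _)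
  have hVint : Integrable V ℙ := by
    rw [hVeq]
    exact hWWint.sub hsubint
  have hVval : ∫ ω, V ω ∂(ℙ : Measure Ω) ≤ 2*((n:ℝ)-1)^2*h := by
    rw [hVeq]
    rw [integral_sub hWWint hsubint,
      integral_sub (hWint.const_mul (2*c)) (integrable_const _), integral_const_mul,
      hWval, integral_const]
    simp only [measureReal_def, measure_univ, ENNReal.toReal_one, smul_eq_mul, one_mul]
    have := hWWval
    nlinarith
  set A : Set Ω := {ω | W ω ≤ c/2} with hA
  have hAmeas : MeasurableSet A := by
    apply measurableSet_le _ measurable_const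
    rw [hW]
    apply Finset.measurable_sum
    intro k _
    exact (Finset.measurable_sum _ (fun j _ => hmeas j)).exp
  have markov : (c/2)^2 * (ℙ A).toReal ≤ ∫ ω, V ω ∂(ℙ : Measure Ω) := by
    have h1 : ∫ ω in A, V ω ∂(ℙ : Measure Ω) ≤ ∫ ω, V ω ∂(ℙ : Measure Ω) :=
      setIntegral_le_integral hVint (ae_of_all _ (fun ω => sq_nonneg _))
    have h2 : (c/2)^2 * (ℙ A).toReal ≤ ∫ ω in A, V ω ∂(ℙ : Measure Ω) := by
      have h3 : ∫ ω in A, (c/2)^2 ∂(ℙ : Measure Ω) ≤ ∫ ω in A, V ω ∂(ℙ : Measure Ω) := by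
        apply setIntegral_mono_on (integrable_const _).integrableOn
          hVint.integrableOn hAmeas
        intro ω hω
        have hωA : W ω ≤ c/2 := hω
        show (c/2)^2 ≤ (W ω - c)^2
        have hle2 : c/2 ≤ c - W ω := by linarith
        nlinarith [hle2, hcpos]
      rw [setIntegral_const] at h3
      calc (c/2)^2 * (ℙ A).toReal = (ℙ A).toReal • (c/2)^2 := by
            rw [smul_eq_mul]; ring
        _ ≤ _ := h3
    linarith
  -- conclude
  have hPA : (ℙ A).toReal ≤ 8 / h := by
    have hc2 : (0:ℝ) < (c/2)^2 := by positivity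
    have step : (ℙ A).toReal ≤ (2*((n:ℝ)-1)^2*h) / (c/2)^2 := by
      rw [le_div_iff₀ hc2]
      calc (ℙ A).toReal * (c/2)^2 = (c/2)^2 * (ℙ A).toReal := by ring
        _ ≤ ∫ ω, V ω ∂(ℙ : Measure Ω) := markov
        _ ≤ 2*((n:ℝ)-1)^2*h := hVval
    have heqq : (2*((n:ℝ)-1)^2*h) / (c/2)^2 = 8 / h := by
      rw [hc]
      have hne : h ≠ 0 := ne_of_gt hpos
      have hn1 : ((n:ℝ)-1) ≠ 0 := by nlinarith
      field_simp
      ring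
    rw [heqq] at step
    exact step
  exact hPA

end Main2

/-- The expectations `E[n·Y_n / (Y_1 + ⋯ + Y_n)]` converge to `0`, where
`Y_n = exp(−(E_1 + ⋯ + E_{n−1}))` and the `E_k` are independent, exponentially
distributed with rate `k`. Here `E k` stands for the variable of index `k + 1`. -/
theorem zipfian_atlas_completeness_in_expectation
    {Ω : Type*} [MeasureSpace Ω] [IsProbabilityMeasure (ℙ : Measure Ω)]
    (E : ℕ → Ω → ℝ)
    (hmeas : ∀ k, Measurable (E k))
    (hindep : iIndepFun E ℙ)
    (hdist : ∀ k : ℕ, Measure.map (E k) ℙ = expMeasure (k + 1))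
    (Y : ℕ → Ω → ℝ)
    (hY : ∀ n : ℕ, ∀ ω, Y n ω = Real.exp (-(∑ k ∈ Finset.range (n - 1), E k ω))) :
    Tendsto (fun n : ℕ =>
        ∫ ω, (n : ℝ) * Y n ω / (∑ k ∈ Finset.Icc 1 n, Y k ω) ∂(ℙ : Measure Ω))
      atTop (nhds 0) := by
  classical
  have hYmeas : ∀ m, Measurable (Y m) := by
    intro m
    have : Y m = fun ω => Real.exp (-(∑ k ∈ Finset.range (m-1), E k ω)) := funext (hY m)
    rw [this]
    exact ((Finset.measurable_sum _ (fun j _ => hmeas j)).neg).exp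
  have hYpos : ∀ m ω, 0 < Y m ω := fun m ω => by rw [hY m ω]; exact Real.exp_pos _
  have haeE : ∀ᵐ ω ∂(ℙ : Measure Ω), ∀ j, 0 ≤ E j ω := by
    rw [MeasureTheory.ae_all_iff]
    intro j
    have hnull : (ℙ : Measure Ω) (E j ⁻¹' Set.Iio 0) = 0 := by
      rw [← Measure.map_apply (hmeas j) measurableSet_Iio, hdist j]
      show expMeasure ((j:ℝ)+1) (Set.Iio 0) = 0
      rw [show expMeasure ((j:ℝ)+1) = MeasureTheory.volume.withDensity
        (exponentialPDF ((j:ℝ)+1)) from rfl]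
      rw [withDensity_apply _ measurableSet_Iio]
      exact lintegral_exponentialPDF_of_nonpos le_rfl
    rw [ae_iff]
    have hset : {ω | ¬ 0 ≤ E j ω} = E j ⁻¹' Set.Iio 0 := by
      ext ω; simp [not_le]
    rw [hset]
    exact hnull
  have hfnonneg : ∀ n : ℕ, ∀ ω, 0 ≤ (n : ℝ) * Y n ω / (∑ k ∈ Finset.Icc 1 n, Y k ω) := by
    intro n ω
    apply div_nonneg
    · exact mul_nonneg (Nat.cast_nonneg n) (hYpos n ω).le
    · exact Finset.sum_nonneg (fun k _ => (hYpos k ω).le)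
  have hf_le_one : ∀ᵐ ω ∂(ℙ : Measure Ω), ∀ n : ℕ, 1 ≤ n →
      (n:ℝ) * Y n ω / (∑ k ∈ Finset.Icc 1 n, Y k ω) ≤ 1 := by
    filter_upwards [haeE] with ω hω
    intro n hn1
    have hmono : ∀ k ∈ Finset.Icc 1 n, Y n ω ≤ Y k ω := by
      intro k hk
      have hkn : k ≤ n := (Finset.mem_Icc.mp hk).2
      rw [hY n ω, hY k ω]
      apply Real.exp_le_exp.mpr
      apply neg_le_neg
      apply Finset.sum_le_sum_of_subset_of_nonneg
      · exact Finset.range_subset_range.mpr (by omega)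
      · intro j _ _; exact hω j
    have hden : 0 < ∑ k ∈ Finset.Icc 1 n, Y k ω := by
      apply Finset.sum_pos (fun k _ => hYpos k ω)
      exact Finset.nonempty_Icc.mpr hn1
    rw [div_le_one hden]
    calc (n:ℝ) * Y n ω = ∑ _k ∈ Finset.Icc 1 n, Y n ω := by
          rw [Finset.sum_const, Nat.card_Icc, nsmul_eq_mul]
          norm_num
      _ ≤ _ := Finset.sum_le_sum hmono
  have hfmeas : ∀ n : ℕ,
      Measurable (fun ω => (n:ℝ) * Y n ω / (∑ k ∈ Finset.Icc 1 n, Y k ω)) := by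
    intro n
    exact ((hYmeas n).const_mul _).div (Finset.measurable_sum _ (fun k _ => hYmeas k))
  have hfint : ∀ n : ℕ, 1 ≤ n →
      Integrable (fun ω => (n:ℝ) * Y n ω / (∑ k ∈ Finset.Icc 1 n, Y k ω)) ℙ := by
    intro n hn
    apply Integrable.mono' (integrable_const (1:ℝ)) (hfmeas n).aestronglyMeasurable
    filter_upwards [hf_le_one] with ω hω
    rw [Real.norm_eq_abs, abs_of_nonneg (hfnonneg n ω)]
    exact hω n hn
  have key : ∀ n : ℕ, 3 ≤ n →
      (∫ ω, (n:ℝ) * Y n ω / (∑ k ∈ Finset.Icc 1 n, Y k ω) ∂(ℙ : Measure Ω))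
        ≤ 12 / (∑ k ∈ Finset.Icc 3 n, 1/((k:ℝ)-1)) := by
    intro n hn3
    set hs : ℝ := ∑ k ∈ Finset.Icc 3 n, 1/((k:ℝ)-1) with hhs
    set W : Ω → ℝ := fun ω => ∑ k ∈ Finset.Icc 3 n,
      Real.exp (∑ j ∈ Finset.Ico (k-1) (n-1), E j ω) with hWdef
    set c : ℝ := ((n:ℝ)-1) * hs with hcdef
    set f : Ω → ℝ := fun ω => (n:ℝ) * Y n ω / (∑ k ∈ Finset.Icc 1 n, Y k ω) with hfdef
    have hnR : (3:ℝ) ≤ (n:ℝ) := by exact_mod_cast hn3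
    have hhalf : 1/2 ≤ hs := by
      rw [hhs]
      have h3I : 3 ∈ Finset.Icc 3 n := Finset.mem_Icc.mpr ⟨le_refl 3, hn3⟩
      have := Finset.single_le_sum (f := fun k : ℕ => 1/((k:ℝ)-1)) (fun i hi => by
        have h3i : 3 ≤ i := (Finset.mem_Icc.mp hi).1
        have : (3:ℝ) ≤ (i:ℝ) := by exact_mod_cast h3i
        apply div_nonneg zero_le_one (by linarith)) h3I
      calc (1:ℝ)/2 = 1/(((3:ℕ):ℝ)-1) := by norm_num
        _ ≤ _ := this
    have hpos : 0 < hs := by linarith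
    have hcpos : 0 < c := by rw [hcdef]; exact mul_pos (by linarith) hpos
    set A : Set Ω := {ω | W ω ≤ c/2} with hAdef
    have hAmeas : MeasurableSet A := by
      apply measurableSet_le _ measurable_const
      rw [hWdef]
      exact Finset.measurable_sum _
        (fun k _ => (Finset.measurable_sum _ (fun j _ => hmeas j)).exp)
    have hPA : (ℙ A).toReal ≤ 8 / hs := cheb hmeas hindep hdist hn3
    have hYk : ∀ ω, ∀ k, 3 ≤ k → k ≤ n →
        Y k ω = Y n ω * Real.exp (∑ j ∈ Finset.Ico (k-1) (n-1), E j ω) := by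
      intro ω k h3 hkn
      rw [hY k ω, hY n ω, ← Real.exp_add]
      congr 1
      have hsplit := Finset.sum_Ico_consecutive (fun j => E j ω) (Nat.zero_le (k-1))
        (show k-1 ≤ n-1 by omega)
      simp only [Finset.range_eq_Ico]
      linarith [hsplit]
    have hlow : ∀ ω, Y n ω * W ω ≤ ∑ k ∈ Finset.Icc 1 n, Y k ω := by
      intro ω
      have h1 : Y n ω * W ω = ∑ k ∈ Finset.Icc 3 n, Y k ω := by
        rw [hWdef, Finset.mul_sum]
        exact (Finset.sum_congr rfl (fun k hk => by
          have hmem := Finset.mem_Icc.mp hk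
          rw [hYk ω k hmem.1 hmem.2])).symm
      rw [h1]
      apply Finset.sum_le_sum_of_subset_of_nonneg
      · exact Finset.Icc_subset_Icc_left (by omega)
      · intro k _ _; exact (hYpos k ω).le
    have hboundAc : ∀ ω, ω ∈ Aᶜ → f ω ≤ 4 / hs := by
      intro ω hω
      have hWω : c/2 < W ω := not_le.mp hω
      have hDpos : 0 < ∑ k ∈ Finset.Icc 1 n, Y k ω :=
        Finset.sum_pos (fun k _ => hYpos k ω) (Finset.nonempty_Icc.mpr (by omega))
      have hYn := hYpos n ω
      have hD : Y n ω * (c/2) ≤ ∑ k ∈ Finset.Icc 1 n, Y k ω :=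
        le_trans (by nlinarith) (hlow ω)
      show (n:ℝ) * Y n ω / (∑ k ∈ Finset.Icc 1 n, Y k ω) ≤ 4 / hs
      rw [div_le_div_iff₀ hDpos hpos]
      have h3 : 0 ≤ Y n ω * hs * ((n:ℝ) - 2) :=
        mul_nonneg (mul_nonneg hYn.le hpos.le) (by linarith)
      have h2 : (n:ℝ) * Y n ω * hs ≤ Y n ω * (c/2) * 4 := by
        rw [hcdef]; nlinarith [h3]
      nlinarith [hD, hpos, hYn]
    have hsplitint : ∫ ω, f ω ∂(ℙ : Measure Ω)
        = (∫ ω in A, f ω ∂(ℙ : Measure Ω)) + ∫ ω in Aᶜ, f ω ∂(ℙ : Measure Ω) :=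
      (integral_add_compl hAmeas (hfint n (by omega))).symm
    have hIA : ∫ ω in A, f ω ∂(ℙ : Measure Ω) ≤ (ℙ A).toReal := by
      have h1 : ∫ ω in A, f ω ∂(ℙ : Measure Ω) ≤ ∫ _ω in A, (1:ℝ) ∂(ℙ : Measure Ω) := by
        apply setIntegral_mono_ae_restrict ((hfint n (by omega)).integrableOn)
          ((integrable_const _).integrableOn)
        apply ae_restrict_of_ae
        filter_upwards [hf_le_one] with ω hω using hω n (by omega)
      rw [setIntegral_const, smul_eq_mul, mul_one] at h1
      exact h1
    have hPAc1 : (ℙ Aᶜ).toReal ≤ 1 := by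
      have h2 := ENNReal.toReal_mono (measure_ne_top (ℙ : Measure Ω) Set.univ)
        (measure_mono (Set.subset_univ Aᶜ))
      rwa [measure_univ, ENNReal.toReal_one] at h2
    have hIAc : ∫ ω in Aᶜ, f ω ∂(ℙ : Measure Ω) ≤ 4 / hs := by
      have h1 : ∫ ω in Aᶜ, f ω ∂(ℙ : Measure Ω) ≤ ∫ _ω in Aᶜ, (4/hs) ∂(ℙ : Measure Ω) :=
        setIntegral_mono_on ((hfint n (by omega)).integrableOn)
          ((integrable_const _).integrableOn) hAmeas.compl (fun ω hω => hboundAc ω hω)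
      rw [setIntegral_const, smul_eq_mul, measureReal_def] at h1
      have h40 : 0 ≤ 4/hs := by positivity
      nlinarith [h1, hPAc1, h40]
    calc ∫ ω, f ω ∂(ℙ : Measure Ω) = _ + _ := hsplitint
      _ ≤ (ℙ A).toReal + 4/hs := add_le_add hIA hIAc
      _ ≤ 8/hs + 4/hs := by linarith [hPA]
      _ = 12/hs := by ring
  apply squeeze_zero' (f := fun n : ℕ =>
      ∫ ω, (n:ℝ) * Y n ω / (∑ k ∈ Finset.Icc 1 n, Y k ω) ∂(ℙ : Measure Ω))
    (g := fun n : ℕ => 12 / (∑ k ∈ Finset.Icc 3 n, 1/((k:ℝ)-1)))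
  · exact Filter.Eventually.of_forall (fun n => integral_nonneg (hfnonneg n))
  · filter_upwards [eventually_ge_atTop 3] with n hn
    exact key n hn
  · exact Filter.Tendsto.div_atTop tendsto_const_nhds hsum_tendsto
end

section
/- Let g > 0 and let (σ_k²)_{k≥1} be a nondecreasing sequence of positive real numbers, and define the slope parameters s_k = (σ_k² + σ_{k+1}²)/(4g) for k ≥ 1. Suppose that for each n ≥ 2 there exist nonnegative weights w_1^{(n)}, …, w_n^{(n)} with w_1^{(n)} + ⋯ + w_n^{(n)} = 1 such that lim_{n→∞} Σ_{k=1}^n w_k^{(n)}·σ_k² = 2g and limsup_{n→∞} w_1^{(n)} ≤ 1/2. Then the sequence (s_k) is nondecreasing, s_1 ≤ 1, and either s_k → ∞ as k → ∞ or lim_{k→∞} s_k ≥ 1. -/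
open Filter

/-- Analytic core of Proposition 2: for a simple first-order family with nondecreasing
variances `σ_k²` and slope parameters `s_k = (σ_k² + σ_{k+1}²)/(4g)`, if there are
weights summing to 1 whose variance-weighted averages tend to `2g` and whose top weight
has limsup at most `1/2`, then `(s_k)` is nondecreasing, `s_1 ≤ 1`, and either
`s_k → ∞` or `lim s_k ≥ 1`. -/
theorem quasi_zipfian_of_conservative_complete
    (g : ℝ) (hg : 0 < g) (σsq : ℕ → ℝ)
    (hσpos : ∀ k : ℕ, 1 ≤ k → 0 < σsq k)
    (hσmono : ∀ k : ℕ, 1 ≤ k → σsq k ≤ σsq (k + 1))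
    (s : ℕ → ℝ) (hs : ∀ k : ℕ, s k = (σsq k + σsq (k + 1)) / (4 * g))
    (w : ℕ → ℕ → ℝ)
    (hw_nonneg : ∀ n : ℕ, 2 ≤ n → ∀ k ∈ Finset.Icc 1 n, 0 ≤ w n k)
    (hw_sum : ∀ n : ℕ, 2 ≤ n → ∑ k ∈ Finset.Icc 1 n, w n k = 1)
    (hconserv : Tendsto (fun n : ℕ => ∑ k ∈ Finset.Icc 1 n, w n k * σsq k)
      atTop (nhds (2 * g)))
    (htop : limsup (fun n : ℕ => w n 1) atTop ≤ 1 / 2) :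
    (∀ k : ℕ, 1 ≤ k → s k ≤ s (k + 1)) ∧ s 1 ≤ 1 ∧
      (Tendsto s atTop atTop ∨ ∃ L : ℝ, Tendsto s atTop (nhds L) ∧ 1 ≤ L) := by
  have h4g : (0:ℝ) < 4 * g := by linarith
  have hmono' : ∀ a b : ℕ, 1 ≤ a → a ≤ b → σsq a ≤ σsq b := by
    intro a b ha hab
    induction b with
    | zero => omega
    | succ m ih =>
      rcases Nat.lt_or_ge a (m+1) with h | h
      · exact le_trans (ih (by omega)) (hσmono m (by omega))
      · have : a = m + 1 := by omega
        simp [this]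
  -- Part 1
  have part1 : ∀ k : ℕ, 1 ≤ k → s k ≤ s (k + 1) := by
    intro k hk
    rw [hs, hs]
    have h1 := hσmono k hk
    have h2 := hσmono (k+1) (by omega)
    gcongr
  -- w n 1 is eventually in [0,1]
  have hw1mem : ∀ n : ℕ, 2 ≤ n → w n 1 ≤ 1 := by
    intro n hn
    rw [← hw_sum n hn]
    exact Finset.single_le_sum (fun k hk => hw_nonneg n hn k hk)
      (by simp; omega)
  have hbd : IsBoundedUnder (· ≤ ·) atTop (fun n : ℕ => w n 1) := by
    apply isBoundedUnder_of_eventually_le (a := (1:ℝ))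
    filter_upwards [eventually_ge_atTop 2] with n hn using hw1mem n hn
  -- lower bound on weighted sums
  have hsplit : ∀ n : ℕ, 2 ≤ n →
      w n 1 * σsq 1 + (1 - w n 1) * σsq 2 ≤ ∑ k ∈ Finset.Icc 1 n, w n k * σsq k := by
    intro n hn
    have hins : Finset.Icc 1 n = insert 1 (Finset.Icc 2 n) := by
      ext x; simp; omega
    have h1not : (1:ℕ) ∉ Finset.Icc 2 n := by simp
    have hsum2 : ∑ k ∈ Finset.Icc 2 n, w n k = 1 - w n 1 := by
      have := hw_sum n hn
      rw [hins, Finset.sum_insert h1not] at this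
      linarith
    rw [hins, Finset.sum_insert h1not]
    have : (1 - w n 1) * σsq 2 ≤ ∑ k ∈ Finset.Icc 2 n, w n k * σsq k := by
      rw [← hsum2, Finset.sum_mul]
      apply Finset.sum_le_sum
      intro k hk
      simp only [Finset.mem_Icc] at hk
      have hwk : 0 ≤ w n k := hw_nonneg n hn k (by simp; omega)
      have := hmono' 2 k (by norm_num) hk.1
      nlinarith
    linarith
  -- Part 2 : σsq 1 + σsq 2 ≤ 4 g
  have key2 : σsq 1 + σsq 2 ≤ 4 * g := by
    have hεbound : ∀ ε : ℝ, 0 < ε →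
        σsq 2 - (1/2 + ε) * (σsq 2 - σsq 1) ≤ 2 * g := by
      intro ε hε
      have hlt : limsup (fun n : ℕ => w n 1) atTop < 1/2 + ε := by linarith
      have hev : ∀ᶠ n in atTop, w n 1 < 1/2 + ε :=
        eventually_lt_of_limsup_lt hlt hbd
      apply ge_of_tendsto hconserv
      filter_upwards [hev, eventually_ge_atTop 2] with n hwlt hn
      have h12 := hσmono 1 le_rfl
      have hsp := hsplit n hn
      have hw1nn : 0 ≤ w n 1 := hw_nonneg n hn 1 (by simp; omega)
      nlinarith
    have h12 := hσmono 1 le_rfl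
    by_contra hcon
    push_neg at hcon
    have hpos : (0:ℝ) < 2 * (σsq 2 - σsq 1) + 1 := by linarith
    set δ : ℝ := (σsq 1 + σsq 2 - 4*g) / (2 * (σsq 2 - σsq 1) + 1) with hδdef
    have hδ : 0 < δ := div_pos (by linarith) hpos
    have hkey := hεbound δ hδ
    have hδB : δ * (2 * (σsq 2 - σsq 1) + 1) = σsq 1 + σsq 2 - 4*g :=
      div_mul_cancel₀ _ (ne_of_gt hpos)
    nlinarith [hkey, hδB, hδ]
  have part2 : s 1 ≤ 1 := by
    rw [hs]
    rw [div_le_one h4g]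
    simpa using key2
  refine ⟨part1, part2, ?_⟩
  -- Part 3
  set τ : ℕ → ℝ := fun k => σsq (k + 1) with hτ
  have hτmono : Monotone τ := monotone_nat_of_le_succ fun k => hσmono (k+1) (by omega)
  by_cases hbdd : BddAbove (Set.range τ)
  · right
    have hlim : Tendsto τ atTop (nhds (⨆ i, τ i)) := tendsto_atTop_ciSup hτmono hbdd
    set S := ⨆ i, τ i with hS
    have hlim' : Tendsto (fun k => τ (k + 1)) atTop (nhds S) :=
      (tendsto_add_atTop_iff_nat 1).2 hlim
    have hslim : Tendsto (fun k => s (k + 1)) atTop (nhds ((S + S) / (4 * g))) := by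
      have : Tendsto (fun k => (τ k + τ (k+1)) / (4 * g)) atTop (nhds ((S + S) / (4*g))) :=
        (hlim.add hlim').div_const _
      convert this using 2 with k
      rw [hs]
    refine ⟨(S + S) / (4 * g), (tendsto_add_atTop_iff_nat 1).1 hslim, ?_⟩
    -- S ≥ 2g
    have hSle : 2 * g ≤ S := by
      apply le_of_tendsto hconserv
      filter_upwards [eventually_ge_atTop 2] with n hn
      calc ∑ k ∈ Finset.Icc 1 n, w n k * σsq k
          ≤ ∑ k ∈ Finset.Icc 1 n, w n k * S := by
            apply Finset.sum_le_sum
            intro k hk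
            simp only [Finset.mem_Icc] at hk
            have hσS : σsq k ≤ S := by
              have : σsq (k - 1 + 1) ≤ S := le_ciSup hbdd (k - 1)
              rwa [Nat.sub_add_cancel hk.1] at this
            exact mul_le_mul_of_nonneg_left hσS (hw_nonneg n hn k (by simp [hk.1, hk.2]))
        _ = S := by rw [← Finset.sum_mul, hw_sum n hn, one_mul]
    rw [le_div_iff₀ h4g]
    linarith
  · left
    have hτdiv : Tendsto τ atTop atTop := tendsto_atTop_atTop_of_monotone' hτmono hbdd
    have hdiv : Tendsto (fun k => τ k / (4 * g)) atTop atTop :=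
      hτdiv.atTop_div_const h4g
    have hsdiv : Tendsto (fun k => s (k + 1)) atTop atTop := by
      apply tendsto_atTop_mono _ hdiv
      intro k
      rw [hs]
      have hpos := hσpos (k + 2) (by omega)
      have : τ k / (4*g) ≤ (τ k + σsq (k+1+1)) / (4 * g) := by
        gcongr; · linarith
      simpa [hτ] using this
    exact (tendsto_add_atTop_iff_nat 1).1 hsdiv
end
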